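/- arXiv:1503.08705 — 5 statements merged into one kernel-verified Lean document; each statement's English description precedes it below -/
import Mathlib

section
/- Let E be a directed graph, R a commutative ring with unit, and let β_1, β_2, …, β_n be distinct cycles in E all based at a vertex u ∈ E^0 (i.e. s(β_i) = r(β_i) = u for all i). If every cycle based at u has an exit, then there exists a finite path γ ∈ E* with s(γ) = u such that γ* β_i γ = 0 in L_R(E) for all i = 1, 2, …, n. -/
set_option synthInstance.maxHeartbeats 1000000
set_option maxHeartbeats 1000000

/-- A directed graph `E = (E⁰, E¹, r, s)`. -/
structure DGraph : Type 1 where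
  V : Type
  E : Type
  src : E → V
  rng : E → V

namespace DGraph

/-- Generators of the Leavitt path algebra: vertices, (real) edges and ghost edges. -/
inductive LGen (G : DGraph) : Type
  | vert : G.V → LGen G
  | edge : G.E → LGen G
  | ghost : G.E → LGen G

variable (G : DGraph) (R : Type) [CommRing R]

open FreeAlgebra

/-- The defining relations of the Leavitt path algebra of `G` over `R`. -/
inductive LeavittRel : FreeAlgebra R (LGen G) → FreeAlgebra R (LGen G) → Prop
  | vert_self (v : G.V) :
      LeavittRel (ι R (.vert v) * ι R (.vert v)) (ι R (.vert v))
  | vert_ne {v w : G.V} (h : v ≠ w) :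
      LeavittRel (ι R (.vert v) * ι R (.vert w)) 0
  | src_edge (e : G.E) :
      LeavittRel (ι R (.vert (G.src e)) * ι R (.edge e)) (ι R (.edge e))
  | edge_rng (e : G.E) :
      LeavittRel (ι R (.edge e) * ι R (.vert (G.rng e))) (ι R (.edge e))
  | rng_ghost (e : G.E) :
      LeavittRel (ι R (.vert (G.rng e)) * ι R (.ghost e)) (ι R (.ghost e))
  | ghost_src (e : G.E) :
      LeavittRel (ι R (.ghost e) * ι R (.vert (G.src e))) (ι R (.ghost e))
  | ghost_edge_self (e : G.E) :
      LeavittRel (ι R (.ghost e) * ι R (.edge e)) (ι R (.vert (G.rng e)))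
  | ghost_edge_ne {e f : G.E} (h : e ≠ f) :
      LeavittRel (ι R (.ghost e) * ι R (.edge f)) 0
  | cuntz_krieger (v : G.V) (h : {e : G.E | G.src e = v}.Finite)
      (hne : {e : G.E | G.src e = v}.Nonempty) :
      LeavittRel (ι R (.vert v)) (∑ e ∈ h.toFinset, ι R (.edge e) * ι R (.ghost e))

/-- The ambient unital algebra: the quotient of the free algebra by the Leavitt relations.
The Leavitt path algebra itself is the non-unital subalgebra generated by the
generators (for graphs with finitely many vertices it is unital with unit the sum
of the vertices, but this unit differs from the unit of the ambient algebra). -/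
abbrev LeavittAmbient : Type := RingQuot (LeavittRel G R)

/-- The vertex idempotents, in the ambient algebra. -/
def av (v : G.V) : LeavittAmbient G R := RingQuot.mkAlgHom R (LeavittRel G R) (ι R (.vert v))

/-- The edge elements, in the ambient algebra. -/
def ae (e : G.E) : LeavittAmbient G R := RingQuot.mkAlgHom R (LeavittRel G R) (ι R (.edge e))

/-- The ghost edge elements, in the ambient algebra. -/
def ag (e : G.E) : LeavittAmbient G R := RingQuot.mkAlgHom R (LeavittRel G R) (ι R (.ghost e))

/-- The generating set of the Leavitt path algebra inside the ambient algebra. -/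
def genSet : Set (LeavittAmbient G R) :=
  Set.range (av G R) ∪ Set.range (ae G R) ∪ Set.range (ag G R)

/-- The Leavitt path algebra `L_R(E)`: the non-unital subalgebra of the ambient
algebra generated by the vertices, edges and ghost edges. -/
def LPA : NonUnitalSubalgebra R (LeavittAmbient G R) :=
  NonUnitalAlgebra.adjoin R (genSet G R)

/-- The vertex idempotent `v ∈ L_R(E)`. -/
def lv (v : G.V) : LPA G R :=
  ⟨av G R v, NonUnitalAlgebra.subset_adjoin R (Or.inl (Or.inl ⟨v, rfl⟩))⟩

/-- The edge element `e ∈ L_R(E)`. -/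
def le (e : G.E) : LPA G R :=
  ⟨ae G R e, NonUnitalAlgebra.subset_adjoin R (Or.inl (Or.inr ⟨e, rfl⟩))⟩

/-- The ghost edge element `e* ∈ L_R(E)`. -/
def lg (e : G.E) : LPA G R :=
  ⟨ag G R e, NonUnitalAlgebra.subset_adjoin R (Or.inr ⟨e, rfl⟩)⟩

variable {G}

/-- `IsPathFrom G u w es` means that the list of edges `es` is a path from `u` to `w`;
for the empty list this means `u = w`. -/
def IsPathFrom : G.V → G.V → List G.E → Prop
  | u, w, [] => u = w
  | u, w, e :: es => G.src e = u ∧ IsPathFrom (G.rng e) w es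

/-- `IsCycleAt G u c` means `c` is a cycle based at `u`: a path of positive
length from `u` to `u`. -/
def IsCycleAt (u : G.V) (c : List G.E) : Prop :=
  c ≠ [] ∧ IsPathFrom u u c

/-- A path (given as a list of edges) has an exit if some edge `f` of the graph has the same
source as some edge of the path, but is distinct from it. -/
def HasExit (c : List G.E) : Prop :=
  ∃ e ∈ c, ∃ f : G.E, G.src f = G.src e ∧ f ≠ e

variable (G)

/-- Product of a nonempty list of edges in `L_R(E)`. -/
def edgeProd : G.E → List G.E → LPA G R
  | e, [] => le G R e
  | e, f :: es => le G R e * edgeProd f es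

/-- The element of `L_R(E)` associated to a path: the product of the edges,
or the vertex `u` for a trivial path at `u`. -/
def pathElem (u : G.V) : List G.E → LPA G R
  | [] => lv G R u
  | e :: es => edgeProd G R e es

/-- Product of the ghost edges of a nonempty list of edges, in reverse order. -/
def ghostProd : G.E → List G.E → LPA G R
  | e, [] => lg G R e
  | e, f :: es => ghostProd f es * lg G R e

/-- The element `γ*` of `L_R(E)` associated to a path `γ`: the product of the ghost
edges in reverse order, or the vertex `u` for a trivial path at `u`. -/
def ghostElem (u : G.V) : List G.E → LPA G R
  | [] => lv G R u
  | e :: es => ghostProd G R e es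

/-- `cpow x n = x ^ (n + 1)`, the (n+1)-st power in the non-unital algebra `L_R(E)`. -/
def cpow (x : LPA G R) : ℕ → LPA G R
  | 0 => x
  | n + 1 => x * cpow x n

/-- For a polynomial `q(z) = Σ_{n} r_n z^n`, a vertex idempotent `p` and an element `x`,
`polyCyc G R q p x = r_0 • p + Σ_{n ≥ 1} r_n • x ^ n`.  This is the element `q(α)` when
`p` is the base vertex of a cycle `α` with `x` the corresponding element. -/
noncomputable def polyCyc (q : Polynomial R) (p x : LPA G R) : LPA G R :=
  q.sum fun n r => r • (if n = 0 then p else cpow G R x (n - 1))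

end DGraph

namespace DGraph

variable {G : DGraph} (R : Type) [CommRing R]

/-! ### Basic relations in the Leavitt path algebra -/

lemma lg_mul_le_same (e : G.E) : lg G R e * le G R e = lv G R (G.rng e) :=
  Subtype.ext <| by
    show ag G R e * ae G R e = av G R (G.rng e)
    rw [ag, ae, av, ← map_mul]
    exact RingQuot.mkAlgHom_rel R (LeavittRel.ghost_edge_self e)

lemma lg_mul_le_ne {e f : G.E} (h : e ≠ f) : lg G R e * le G R f = 0 :=
  Subtype.ext <| by
    show ag G R e * ae G R f = 0
    rw [ag, ae, ← map_mul, RingQuot.mkAlgHom_rel R (LeavittRel.ghost_edge_ne h), map_zero]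

lemma lv_mul_le {v : G.V} {e : G.E} (h : G.src e = v) : lv G R v * le G R e = le G R e :=
  Subtype.ext <| by
    subst h
    show av G R (G.src e) * ae G R e = ae G R e
    rw [av, ae, ← map_mul]
    exact RingQuot.mkAlgHom_rel R (LeavittRel.src_edge e)

lemma lv_mul_edgeProd {v : G.V} {e : G.E} (es : List G.E) (h : G.src e = v) :
    lv G R v * edgeProd G R e es = edgeProd G R e es := by
  cases es with
  | nil => exact lv_mul_le R h
  | cons f fs =>
    show lv G R v * (le G R e * edgeProd G R f fs) = le G R e * edgeProd G R f fs
    rw [← mul_assoc, lv_mul_le R h]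

lemma lg_mul_edgeProd_ne {e f : G.E} (fs : List G.E) (h : e ≠ f) :
    lg G R e * edgeProd G R f fs = 0 := by
  cases fs with
  | nil => exact lg_mul_le_ne R h
  | cons g gs =>
    show lg G R e * (le G R f * edgeProd G R g gs) = 0
    rw [← mul_assoc, lg_mul_le_ne R h, zero_mul]

lemma ghostProd_mul_edgeProd_ne {x y : G.E} (as bs : List G.E) (h : x ≠ y) :
    ghostProd G R x as * edgeProd G R y bs = 0 := by
  cases as with
  | nil => exact lg_mul_edgeProd_ne R bs h
  | cons a as' =>
    show ghostProd G R a as' * lg G R x * edgeProd G R y bs = 0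
    rw [mul_assoc, lg_mul_edgeProd_ne R bs h, mul_zero]

/-- Key algebraic lemma: if `x :: as` is not a prefix of the path `y :: bs` (and is no
longer than it), then `(x :: as)* ⬝ (y :: bs) = 0` in the Leavitt path algebra. -/
lemma ghostProd_mul_edgeProd_of_not_prefix :
    ∀ (as : List G.E) (x y : G.E) (bs : List G.E) (v w : G.V),
      IsPathFrom v w (y :: bs) → as.length ≤ bs.length →
      ¬ (x :: as) <+: (y :: bs) → ghostProd G R x as * edgeProd G R y bs = 0 := by
  intro as
  induction as with
  | nil =>
    intro x y bs v w hpath hlen hpre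
    have hxy : x ≠ y := by
      rintro rfl
      exact hpre ⟨bs, rfl⟩
    exact ghostProd_mul_edgeProd_ne R [] bs hxy
  | cons a as' ih =>
    intro x y bs v w hpath hlen hpre
    by_cases hxy : x = y
    · subst hxy
      cases bs with
      | nil => simp at hlen
      | cons b bs' =>
        have hpre' : ¬ (a :: as') <+: (b :: bs') := by
          intro hp; exact hpre (List.cons_prefix_cons.mpr ⟨rfl, hp⟩)
        have hpath' : IsPathFrom (G.rng x) w (b :: bs') := hpath.2
        have hsrcb : G.src b = G.rng x := hpath'.1
        show ghostProd G R a as' * lg G R x * (le G R x * edgeProd G R b bs') = 0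
        rw [mul_assoc, ← mul_assoc (lg G R x), lg_mul_le_same R x,
          lv_mul_edgeProd R bs' hsrcb]
        exact ih a b bs' (G.rng x) w hpath' (Nat.succ_le_succ_iff.mp hlen) hpre'
    · exact ghostProd_mul_edgeProd_ne R (a :: as') bs hxy

lemma edgeProd_mul_edgeProd :
    ∀ (bs : List G.E) (y z : G.E) (cs : List G.E),
      edgeProd G R y bs * edgeProd G R z cs = edgeProd G R y (bs ++ z :: cs) := by
  intro bs
  induction bs with
  | nil => intro y z cs; rfl
  | cons b bs' ih =>
    intro y z cs
    show le G R y * edgeProd G R b bs' * edgeProd G R z cs =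
      le G R y * edgeProd G R b (bs' ++ z :: cs)
    rw [mul_assoc, ih b z cs]

/-! ### Combinatorics of paths -/

lemma isPathFrom_append :
    ∀ (l₁ : List G.E) (v w x : G.V), IsPathFrom v w l₁ →
      ∀ l₂, IsPathFrom w x l₂ → IsPathFrom v x (l₁ ++ l₂) := by
  intro l₁
  induction l₁ with
  | nil =>
    intro v w x h l₂ h₂
    have h' : v = w := h
    subst h'
    exact h₂
  | cons e es ih =>
    intro v w x h l₂ h₂
    exact ⟨h.1, ih (G.rng e) w x h.2 l₂ h₂⟩

lemma isPathFrom_src_getElem_zero :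
    ∀ (l : List G.E) (v w : G.V), IsPathFrom v w l →
      ∀ (h : 0 < l.length), G.src (l[0]'h) = v := by
  intro l v w hp h
  cases l with
  | nil => simp at h
  | cons e es => exact hp.1

lemma isPathFrom_consec :
    ∀ (l : List G.E) (v w : G.V), IsPathFrom v w l →
      ∀ m (h : m + 1 < l.length),
        G.rng (l[m]'(Nat.lt_of_succ_lt h)) = G.src (l[m+1]'h) := by
  intro l
  induction l with
  | nil => intro v w hp m h; simp at h
  | cons e es ih =>
    intro v w hp m h
    cases m with
    | zero =>
      have hes : 0 < es.length := by simpa using h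
      simp only [List.getElem_cons_zero, List.getElem_cons_succ]
      exact (isPathFrom_src_getElem_zero es (G.rng e) w hp.2 hes).symm
    | succ m' =>
      simp only [List.getElem_cons_succ]
      exact ih (G.rng e) w hp.2 m' (by simpa using h)

lemma isPathFrom_rng_getElem_last :
    ∀ (l : List G.E) (v w : G.V), IsPathFrom v w l →
      ∀ (h : 0 < l.length), G.rng (l[l.length - 1]'(by omega)) = w := by
  intro l
  induction l with
  | nil => intro v w hp h; simp at h
  | cons e es ih =>
    intro v w hp h
    cases es with
    | nil => exact hp.2
    | cons f fs =>
      have h2 : 0 < (f :: fs).length := by simp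
      have := ih (G.rng e) w hp.2 h2
      simpa using this

/-- The periodic infinite sequence of edges obtained by repeating a nonempty list. -/
def wseq (G : DGraph) (l : List G.E) (h : 0 < l.length) (k : ℕ) : G.E :=
  l[k % l.length]'(Nat.mod_lt _ h)

lemma wseq_src0 {u : G.V} {l : List G.E} (hc : IsPathFrom u u l) (h : 0 < l.length) :
    G.src (wseq G l h 0) = u := by
  have h0 : 0 % l.length = 0 := Nat.zero_mod _
  simp only [wseq, h0]
  exact isPathFrom_src_getElem_zero l u u hc h

lemma wseq_link {u : G.V} {l : List G.E} (hc : IsPathFrom u u l) (h : 0 < l.length)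
    (k : ℕ) : G.rng (wseq G l h k) = G.src (wseq G l h (k+1)) := by
  by_cases hk : k % l.length + 1 < l.length
  · have h2 : (k+1) % l.length = k % l.length + 1 := by
      rw [← Nat.mod_add_mod, Nat.mod_eq_of_lt hk]
    simp only [wseq, h2]
    exact isPathFrom_consec l u u hc (k % l.length) hk
  · have hmod := Nat.mod_lt k h
    have h1 : k % l.length = l.length - 1 := by omega
    have h2 : (k+1) % l.length = 0 := by
      rw [← Nat.mod_add_mod, h1, Nat.sub_add_cancel h, Nat.mod_self]
    simp only [wseq, h1, h2]
    rw [isPathFrom_rng_getElem_last l u u hc h]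
    exact (isPathFrom_src_getElem_zero l u u hc h).symm

lemma wseq_getElem {l : List G.E} (h : 0 < l.length) (c m : ℕ) (hm : m < l.length) :
    wseq G l h (l.length * c + m) = l[m]'hm := by
  have h2 : (l.length * c + m) % l.length = m := by
    rw [Nat.mul_add_mod, Nat.mod_eq_of_lt hm]
  simp only [wseq, h2]

lemma isPathFrom_ofFn (w : ℕ → G.E) (hlink : ∀ k, G.rng (w k) = G.src (w (k+1))) :
    ∀ (ℓ a : ℕ), IsPathFrom (G.src (w a)) (G.src (w (a + ℓ)))
      (List.ofFn fun j : Fin ℓ => w (a + j)) := by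
  intro ℓ
  induction ℓ with
  | zero => intro a; exact rfl
  | succ m ih =>
    intro a
    rw [List.ofFn_succ]
    refine ⟨by simp, ?_⟩
    have harr : (fun i : Fin m => w (a + ((i.succ : Fin (m+1)) : ℕ))) =
        fun i : Fin m => w ((a + 1) + (i : ℕ)) := by
      funext i
      congr 1
      simp [Fin.val_succ]
      omega
    have hend : a + (m + 1) = (a + 1) + m := by omega
    simp only [Fin.val_zero, Nat.add_zero]
    rw [hlink a, harr, hend]
    exact ih (a + 1)

lemma prefix_agrees (G : DGraph) (b : List G.E) (hb : 0 < b.length) (g : List G.E)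
    (hp : g <+: b ++ g) : ∀ k (hk : k < g.length), g[k] = wseq G b hb k := by
  intro k
  induction k using Nat.strong_induction_on with
  | _ k ih =>
    intro hk
    have hk2 : k < (b ++ g).length := by simp; omega
    have h1 : g[k]'hk = (b ++ g)[k]'hk2 := hp.getElem hk
    by_cases hkb : k < b.length
    · rw [List.getElem_append_left hkb] at h1
      rw [h1]
      have h3 : k % b.length = k := Nat.mod_eq_of_lt hkb
      simp only [wseq, h3]
    · push_neg at hkb
      rw [List.getElem_append_right hkb] at h1
      have hlt : k - b.length < k := by omega
      have h2 := ih (k - b.length) hlt (by omega)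
      rw [h1, h2]
      have h3 : (k - b.length) % b.length = k % b.length :=
        (Nat.mod_eq_sub_mod hkb).symm
      simp only [wseq, h3]

/-- Combinatorial heart: there is a nonempty path from `u` that eventually disagrees
with every one of the periodic edge sequences of the cycles `β i`. -/
lemma exists_escape (G : DGraph) (u : G.V) (n : ℕ) (i0 : Fin n) (β : Fin n → List G.E)
    (hβ : ∀ i, IsCycleAt u (β i))
    (hexit : ∀ c : List G.E, IsCycleAt u c → HasExit c) :
    ∃ (w : G.V) (γ : List G.E), γ ≠ [] ∧ IsPathFrom u w γ ∧
      ∀ i, ∃ (k : ℕ) (hk : k < γ.length),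
        γ[k]'hk ≠ wseq G (β i) (List.length_pos_iff.mpr (hβ i).1) k := by
  classical
  by_contra hcon
  push_neg at hcon
  have h0 : 0 < (β i0).length := List.length_pos_iff.mpr (hβ i0).1
  set w0 : ℕ → G.E := wseq G (β i0) h0 with hw0
  have hlink0 : ∀ k, G.rng (w0 k) = G.src (w0 (k+1)) := wseq_link (hβ i0).2 h0
  set d : Fin n → ℕ := fun i =>
    if h : ∃ k, wseq G (β i) (List.length_pos_iff.mpr (hβ i).1) k ≠ w0 k then h.choose
    else 0 with hd
  set D : ℕ := Finset.univ.sup d with hD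
  have claim : ∀ k, D < k → ∀ e : G.E, G.src e = G.src (w0 k) → e = w0 k := by
    intro k hkD e hsrc
    set p : List G.E := (List.ofFn fun j : Fin k => w0 j) ++ [e] with hp
    have hplen : p.length = k + 1 := by simp [hp]
    have hppath : IsPathFrom u (G.rng e) p := by
      have h1 := isPathFrom_ofFn w0 hlink0 k 0
      simp only [Nat.zero_add] at h1
      have h2 : IsPathFrom (G.src (w0 k)) (G.rng e) [e] := by
        exact ⟨hsrc.symm ▸ rfl, rfl⟩
      have h3 := isPathFrom_append _ _ _ _ h1 [e] h2
      rwa [wseq_src0 (hβ i0).2 h0] at h3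
    have hpne : p ≠ [] := by simp [hp]
    obtain ⟨i, hi⟩ := hcon (G.rng e) p hpne hppath
    have hagree0 : ∀ m (hm : m < k), p[m]'(by omega) = w0 m := by
      intro m hm
      have hm2 : m < (List.ofFn fun j : Fin k => w0 j).length := by simpa using hm
      simp only [hp]
      rw [List.getElem_append_left hm2, List.getElem_ofFn]
    have hiw : ∀ m, wseq G (β i) (List.length_pos_iff.mpr (hβ i).1) m = w0 m := by
      by_contra hne
      push_neg at hne
      have hdi : d i = hne.choose := by rw [hd]; exact dif_pos hne
      have hspec := hne.choose_spec
      have hdD : d i ≤ D := Finset.le_sup (Finset.mem_univ i)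
      have hdk : d i < k := by omega
      have h1 := hi (d i) (by omega)
      rw [hagree0 (d i) hdk] at h1
      rw [hdi] at h1
      exact hspec h1.symm
    have hk2 : k < p.length := by omega
    have h2 := hi k hk2
    have h3 : p[k]'hk2 = e := by
      have hlen : (List.ofFn fun j : Fin k => w0 j).length ≤ k := by simp
      simp only [hp]
      rw [List.getElem_append_right (by simp)]
      simp
    rw [h3, hiw k] at h2
    exact h2
  obtain ⟨e, he, f, hfs, hfe⟩ := hexit (β i0) (hβ i0)
  obtain ⟨m, hm, hme⟩ := List.getElem_of_mem he
  have hw0k : w0 ((β i0).length * (D + 1) + m) = e := by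
    rw [hw0, wseq_getElem h0 (D+1) m hm]
    exact hme
  have hDk : D < (β i0).length * (D + 1) + m := by
    have h1 : D + 1 ≤ (β i0).length * (D + 1) := Nat.le_mul_of_pos_left (D+1) h0
    omega
  have hfeq := claim _ hDk f (by rw [hw0k]; exact hfs)
  rw [hw0k] at hfeq
  exact hfe hfeq

end DGraph

open DGraph

/-- Let `β_1, …, β_n` be distinct cycles all based at a vertex `u`.  If every cycle based
at `u` has an exit, then there is a finite path `γ` with source `u` such that
`γ* β_i γ = 0` in `L_R(E)` for all `i`. -/
theorem exists_killing_path
    (G : DGraph) (R : Type) [CommRing R]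
    (u : G.V) (n : ℕ) (β : Fin n → List G.E)
    (hβ : ∀ i, IsCycleAt u (β i))
    (hdist : Function.Injective β)
    (hexit : ∀ c : List G.E, IsCycleAt u c → HasExit c) :
    ∃ (w : G.V) (γ : List G.E), IsPathFrom u w γ ∧
      ∀ i, ghostElem G R u γ * pathElem G R u (β i) * pathElem G R u γ = 0 := by
  rcases Nat.eq_zero_or_pos n with hn | hn
  · subst hn
    exact ⟨u, [], rfl, fun i => i.elim0⟩
  · obtain ⟨w, γ, hγne, hγpath, hdiff⟩ := exists_escape G u n ⟨0, hn⟩ β hβ hexit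
    refine ⟨w, γ, hγpath, fun i => ?_⟩
    obtain ⟨z, cs, rfl⟩ : ∃ z cs, γ = z :: cs := by
      cases γ with
      | nil => exact absurd rfl hγne
      | cons z cs => exact ⟨z, cs, rfl⟩
    have hb := (hβ i).1
    obtain ⟨y, bs, hby⟩ : ∃ y bs, β i = y :: bs := by
      cases hby : β i with
      | nil => exact absurd hby hb
      | cons y bs => exact ⟨y, bs, rfl⟩
    rw [hby]
    show ghostProd G R z cs * edgeProd G R y bs * edgeProd G R z cs = 0
    rw [mul_assoc, edgeProd_mul_edgeProd]
    have hpath2 : IsPathFrom u w (y :: (bs ++ z :: cs)) := by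
      have h1 := isPathFrom_append (β i) u u w ((hβ i).2) (z :: cs) hγpath
      rw [hby, List.cons_append] at h1
      exact h1
    have hlen : cs.length ≤ (bs ++ z :: cs).length := by simp; omega
    have hnp : ¬ (z :: cs) <+: (y :: (bs ++ z :: cs)) := by
      intro hpre
      have hpre' : (z :: cs) <+: (β i) ++ (z :: cs) := by
        rw [hby, List.cons_append]; exact hpre
      obtain ⟨k, hk, hne⟩ := hdiff i
      exact hne (prefix_agrees G (β i) (List.length_pos_iff.mpr (hβ i).1) (z :: cs) hpre' k hk)
    exact ghostProd_mul_edgeProd_of_not_prefix R cs z y (bs ++ z :: cs) u w hpath2 hlen hnp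
end

section
/- Let R be a commutative ring with unit. The element u = aaa* + aba*b* + bb*b* of L_{2,R} is a unitary (u*u = uu* = 1) with full spectrum: for every nonzero polynomial q ∈ R[x], the element q(u) ∈ L_{2,R} is nonzero. In particular, L_{2,R} contains a full spectrum unitary. -/
set_option synthInstance.maxHeartbeats 1000000
set_option maxHeartbeats 1000000

/-- The four generators `a, a*, b, b*` of the Leavitt algebra `L_{2,R}`. -/
inductive L2Gen : Type
  | a : L2Gen
  | astar : L2Gen
  | b : L2Gen
  | bstar : L2Gen

open FreeAlgebra

/-- The defining relations of `L_{2,R}`: `a*a = b*b = 1 = aa* + bb*`. -/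
inductive L2Rel (R : Type) [CommRing R] : FreeAlgebra R L2Gen → FreeAlgebra R L2Gen → Prop
  | a_adj : L2Rel R (ι R .astar * ι R .a) 1
  | b_adj : L2Rel R (ι R .bstar * ι R .b) 1
  | ck : L2Rel R (ι R .a * ι R .astar + ι R .b * ι R .bstar) 1

/-- The Leavitt algebra `L_{2,R}`: the universal unital `R`-algebra generated by
`a, a*, b, b*` subject to `a*a = b*b = 1 = aa* + bb*`. -/
abbrev L2 (R : Type) [CommRing R] : Type := RingQuot (L2Rel R)

variable (R : Type) [CommRing R]

/-- The generator `a` of `L_{2,R}`. -/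
def La : L2 R := RingQuot.mkAlgHom R (L2Rel R) (ι R .a)

/-- The generator `b` of `L_{2,R}`. -/
def Lb : L2 R := RingQuot.mkAlgHom R (L2Rel R) (ι R .b)

/-- The generator `a*` of `L_{2,R}`. -/
def Lastar : L2 R := RingQuot.mkAlgHom R (L2Rel R) (ι R .astar)

/-- The generator `b*` of `L_{2,R}`. -/
def Lbstar : L2 R := RingQuot.mkAlgHom R (L2Rel R) (ι R .bstar)

namespace L2

/-- The involution on the generators. -/
def starGen : L2Gen → L2Gen
  | .a => .astar
  | .astar => .a
  | .b => .bstar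
  | .bstar => .b

/-- The auxiliary algebra homomorphism `L_{2,R} → L_{2,R}ᵐᵒᵖ` implementing the involution. -/
noncomputable def starMapAux : L2 R →ₐ[R] (L2 R)ᵐᵒᵖ :=
  RingQuot.liftAlgHom R
    ⟨FreeAlgebra.lift R fun g =>
      MulOpposite.op (RingQuot.mkAlgHom R (L2Rel R) (ι R (starGen g))), by
      intro x y h
      induction h with
      | a_adj =>
          rw [map_one, map_mul, FreeAlgebra.lift_ι_apply, FreeAlgebra.lift_ι_apply,
            ← MulOpposite.op_mul, ← map_mul]
          simp only [starGen]
          rw [RingQuot.mkAlgHom_rel R L2Rel.a_adj, map_one, MulOpposite.op_one]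
      | b_adj =>
          rw [map_one, map_mul, FreeAlgebra.lift_ι_apply, FreeAlgebra.lift_ι_apply,
            ← MulOpposite.op_mul, ← map_mul]
          simp only [starGen]
          rw [RingQuot.mkAlgHom_rel R L2Rel.b_adj, map_one, MulOpposite.op_one]
      | ck =>
          rw [map_one, map_add, map_mul, map_mul, FreeAlgebra.lift_ι_apply,
            FreeAlgebra.lift_ι_apply, FreeAlgebra.lift_ι_apply, FreeAlgebra.lift_ι_apply,
            ← MulOpposite.op_mul, ← MulOpposite.op_mul, ← MulOpposite.op_add,
            ← map_mul, ← map_mul, ← map_add]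
          simp only [starGen]
          rw [RingQuot.mkAlgHom_rel R L2Rel.ck, map_one, MulOpposite.op_one]⟩

lemma starMapAux_mk (x : FreeAlgebra R L2Gen) :
    starMapAux R (RingQuot.mkAlgHom R (L2Rel R) x) =
      FreeAlgebra.lift R (fun g =>
        MulOpposite.op (RingQuot.mkAlgHom R (L2Rel R) (ι R (starGen g)))) x := by
  simp [starMapAux, RingQuot.liftAlgHom_mkAlgHom_apply]

lemma starMapAux_gen (g : L2Gen) :
    starMapAux R (RingQuot.mkAlgHom R (L2Rel R) (ι R g)) =
      MulOpposite.op (RingQuot.mkAlgHom R (L2Rel R) (ι R (starGen g))) := by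
  rw [starMapAux_mk, FreeAlgebra.lift_ι_apply]

lemma starMapAux_starMapAux (x : L2 R) :
    (starMapAux R ((starMapAux R x).unop)).unop = x := by
  obtain ⟨y, rfl⟩ := RingQuot.mkAlgHom_surjective R (L2Rel R) x
  induction y using FreeAlgebra.induction with
  | grade0 r =>
      simp only [AlgHom.commutes, MulOpposite.algebraMap_apply, MulOpposite.unop_op]
  | grade1 g =>
      rw [starMapAux_gen, MulOpposite.unop_op, starMapAux_gen, MulOpposite.unop_op]
      cases g <;> rfl
  | mul x y ihx ihy =>
      rw [map_mul, map_mul, MulOpposite.unop_mul, map_mul, MulOpposite.unop_mul, ihx, ihy]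
  | add x y ihx ihy =>
      rw [map_add, map_add, MulOpposite.unop_add, map_add, MulOpposite.unop_add, ihx, ihy]

/-- The involution making `L_{2,R}` a `*`-algebra; it fixes `R`, and exchanges
`a ↔ a*` and `b ↔ b*`. -/
noncomputable instance instStarRing : StarRing (L2 R) where
  star x := (starMapAux R x).unop
  star_involutive x := starMapAux_starMapAux R x
  star_mul x y := by
    show (starMapAux R (x * y)).unop = (starMapAux R y).unop * (starMapAux R x).unop
    rw [map_mul, MulOpposite.unop_mul]
  star_add x y := by
    show (starMapAux R (x + y)).unop = (starMapAux R x).unop + (starMapAux R y).unop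
    rw [map_add, MulOpposite.unop_add]

lemma star_def (x : L2 R) : star x = (starMapAux R x).unop := rfl

@[simp] lemma star_La : star (La R) = Lastar R := by
  rw [star_def, La, Lastar, starMapAux_gen, MulOpposite.unop_op]; rfl

@[simp] lemma star_Lb : star (Lb R) = Lbstar R := by
  rw [star_def, Lb, Lbstar, starMapAux_gen, MulOpposite.unop_op]; rfl

@[simp] lemma star_Lastar : star (Lastar R) = La R := by
  rw [star_def, La, Lastar, starMapAux_gen, MulOpposite.unop_op]; rfl

@[simp] lemma star_Lbstar : star (Lbstar R) = Lb R := by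
  rw [star_def, Lb, Lbstar, starMapAux_gen, MulOpposite.unop_op]; rfl

/-- The involution on `L_{2,R}` is `R`-linear. -/
lemma star_smul' (r : R) (x : L2 R) : star (r • x) = r • star x := by
  show (starMapAux R (r • x)).unop = r • (starMapAux R x).unop
  rw [map_smul, MulOpposite.unop_smul]

/-- The defining relations hold in `L_{2,R}`. -/
lemma astar_a : star (La R) * La R = 1 := by
  rw [star_La, Lastar, La, ← map_mul, RingQuot.mkAlgHom_rel R L2Rel.a_adj, map_one]

lemma bstar_b : star (Lb R) * Lb R = 1 := by
  rw [star_Lb, Lbstar, Lb, ← map_mul, RingQuot.mkAlgHom_rel R L2Rel.b_adj, map_one]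

lemma ck_rel : La R * star (La R) + Lb R * star (Lb R) = 1 := by
  rw [star_La, star_Lb, La, Lastar, Lb, Lbstar, ← map_mul, ← map_mul, ← map_add,
    RingQuot.mkAlgHom_rel R L2Rel.ck, map_one]

end L2

open L2

namespace L2FS

/-- Infinite binary sequences. -/
abbrev BSeq : Type := ℕ → Bool

/-- Prepend a bit to a sequence. -/
def bcons (c : Bool) (s : BSeq) : BSeq := fun n => Nat.casesOn n c s

/-- Tail of a sequence. -/
def btl (s : BSeq) : BSeq := fun n => s (n + 1)

lemma bcons_tl (s : BSeq) : bcons (s 0) (btl s) = s := funext fun n => by cases n <;> rfl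

lemma btl_bcons (c : Bool) (s : BSeq) : btl (bcons c s) = s := rfl

variable (R : Type) [CommRing R]

/-- The free module on binary sequences. -/
abbrev M : Type := BSeq →₀ R

noncomputable def opA : Module.End R (M R) :=
  Finsupp.lift (M R) R BSeq (fun s => Finsupp.single (bcons false s) 1)

noncomputable def opB : Module.End R (M R) :=
  Finsupp.lift (M R) R BSeq (fun s => Finsupp.single (bcons true s) 1)

noncomputable def opA' : Module.End R (M R) :=
  Finsupp.lift (M R) R BSeq (fun s => if s 0 = false then Finsupp.single (btl s) 1 else 0)

noncomputable def opB' : Module.End R (M R) :=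
  Finsupp.lift (M R) R BSeq (fun s => if s 0 = true then Finsupp.single (btl s) 1 else 0)

lemma opA_single (s : BSeq) (r : R) :
    opA R (Finsupp.single s r) = Finsupp.single (bcons false s) r := by
  simp [opA, Finsupp.lift_apply, Finsupp.sum_single_index, Finsupp.smul_single]

lemma opB_single (s : BSeq) (r : R) :
    opB R (Finsupp.single s r) = Finsupp.single (bcons true s) r := by
  simp [opB, Finsupp.lift_apply, Finsupp.sum_single_index, Finsupp.smul_single]

lemma opA'_single (s : BSeq) (r : R) :
    opA' R (Finsupp.single s r) =
      if s 0 = false then Finsupp.single (btl s) r else 0 := by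
  rw [opA', Finsupp.lift_apply, Finsupp.sum_single_index (by simp)]
  rcases h : s 0 with _ | _ <;> simp [h, Finsupp.smul_single]

lemma opB'_single (s : BSeq) (r : R) :
    opB' R (Finsupp.single s r) =
      if s 0 = true then Finsupp.single (btl s) r else 0 := by
  rw [opB', Finsupp.lift_apply, Finsupp.sum_single_index (by simp)]
  rcases h : s 0 with _ | _ <;> simp [h, Finsupp.smul_single]

lemma relA : opA' R * opA R = 1 := by
  refine Finsupp.lhom_ext fun s r => ?_
  simp [Module.End.mul_apply, opA_single, opA'_single, btl_bcons, bcons]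

lemma relB : opB' R * opB R = 1 := by
  refine Finsupp.lhom_ext fun s r => ?_
  simp [Module.End.mul_apply, opB_single, opB'_single, btl_bcons, bcons]

lemma relCK : opA R * opA' R + opB R * opB' R = 1 := by
  refine Finsupp.lhom_ext fun s r => ?_
  have hs := bcons_tl s
  rcases h : s 0 with _ | _ <;> rw [h] at hs <;>
    simp [LinearMap.add_apply, Module.End.mul_apply, Module.End.one_apply,
      opA_single, opB_single, opA'_single, opB'_single, h, hs]

/-- The image of a generator in the representation. -/
noncomputable def genOp : L2Gen → Module.End R (M R)
  | .a => opA R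
  | .astar => opA' R
  | .b => opB R
  | .bstar => opB' R

/-- The representation of `L_{2,R}` on the free module on binary sequences. -/
noncomputable def rep : L2 R →ₐ[R] Module.End R (M R) :=
  RingQuot.liftAlgHom R
    ⟨FreeAlgebra.lift R (genOp R), by
      intro x y h
      induction h with
      | a_adj =>
          simp only [map_mul, map_one, FreeAlgebra.lift_ι_apply, genOp]
          exact relA R
      | b_adj =>
          simp only [map_mul, map_one, FreeAlgebra.lift_ι_apply, genOp]
          exact relB R
      | ck =>
          simp only [map_add, map_mul, map_one, FreeAlgebra.lift_ι_apply, genOp]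
          exact relCK R⟩

lemma rep_mk (x : FreeAlgebra R L2Gen) :
    rep R (RingQuot.mkAlgHom R (L2Rel R) x) = FreeAlgebra.lift R (genOp R) x := by
  simp [rep, RingQuot.liftAlgHom_mkAlgHom_apply]

lemma rep_La : rep R (La R) = opA R := by
  rw [La, rep_mk, FreeAlgebra.lift_ι_apply]; rfl

lemma rep_Lb : rep R (Lb R) = opB R := by
  rw [Lb, rep_mk, FreeAlgebra.lift_ι_apply]; rfl

lemma rep_Lastar : rep R (Lastar R) = opA' R := by
  rw [Lastar, rep_mk, FreeAlgebra.lift_ι_apply]; rfl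

lemma rep_Lbstar : rep R (Lbstar R) = opB' R := by
  rw [Lbstar, rep_mk, FreeAlgebra.lift_ι_apply]; rfl

/-- The sequence `0^k 1^∞`. -/
def sq (k : ℕ) : BSeq := fun n => decide (k ≤ n)

lemma sq_inj : Function.Injective sq := by
  intro k l h
  have h1 := congrFun h k
  have h2 := congrFun h l
  simp only [sq, decide_eq_decide] at h1 h2
  omega

lemma bcons_false_sq (k : ℕ) : bcons false (sq k) = sq (k + 1) :=
  funext fun n => by
    cases n with
    | zero => simp [bcons, sq]
    | succ m => simp [bcons, sq, Nat.succ_le_succ_iff]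

lemma btl_sq (k : ℕ) : btl (sq (k + 1)) = sq k :=
  funext fun n => by simp [btl, sq, Nat.succ_le_succ_iff]

lemma sq_zero (k : ℕ) : sq (k + 1) 0 = false := by simp [sq]

/-- The operator corresponding to the unitary `u`. -/
noncomputable def repU : Module.End R (M R) :=
  opA R * opA R * opA' R + opA R * opB R * opA' R * opB' R + opB R * opB' R * opB' R

lemma repU_single (k : ℕ) :
    repU R (Finsupp.single (sq (k + 1)) 1) = Finsupp.single (sq (k + 2)) 1 := by
  simp [repU, LinearMap.add_apply, Module.End.mul_apply, opA_single, opB_single,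
    opA'_single, opB'_single, sq_zero, btl_sq, bcons_false_sq]

lemma repU_pow (n : ℕ) :
    (repU R ^ n) (Finsupp.single (sq 1) 1) = Finsupp.single (sq (n + 1)) 1 := by
  induction n with
  | zero => simp
  | succ m ih =>
      rw [pow_succ', Module.End.mul_apply, ih, repU_single]

end L2FS


section UnitaryLemmas

variable (R : Type) [CommRing R]

lemma astar_b_zero : star (La R) * Lb R = 0 := by
  have e : star (La R) * Lb R + star (La R) * Lb R = star (La R) * Lb R := by
    calc star (La R) * Lb R + star (La R) * Lb R
        = star (La R) * La R * (star (La R) * Lb R) +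
          star (La R) * Lb R * (star (Lb R) * Lb R) := by
          rw [astar_a, bstar_b, one_mul, mul_one]
      _ = star (La R) * ((La R * star (La R) + Lb R * star (Lb R)) * Lb R) := by
          noncomm_ring
      _ = star (La R) * Lb R := by rw [ck_rel, one_mul]
  exact add_eq_right.mp e

lemma bstar_a_zero : star (Lb R) * La R = 0 := by
  have e : star (Lb R) * La R + star (Lb R) * La R = star (Lb R) * La R := by
    calc star (Lb R) * La R + star (Lb R) * La R
        = star (Lb R) * La R * (star (La R) * La R) +
          star (Lb R) * Lb R * (star (Lb R) * La R) := by
          rw [astar_a, bstar_b, mul_one, one_mul]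
      _ = star (Lb R) * ((La R * star (La R) + Lb R * star (Lb R)) * La R) := by
          noncomm_ring
      _ = star (Lb R) * La R := by rw [ck_rel, one_mul]
  exact add_eq_right.mp e

lemma t_aa0 : Lastar R * La R = 1 := by
  have h := astar_a R; rwa [star_La] at h

lemma t_bb0 : Lbstar R * Lb R = 1 := by
  have h := bstar_b R; rwa [star_Lb] at h

lemma t_ab0 : Lastar R * Lb R = 0 := by
  have h := astar_b_zero R; rwa [star_La] at h

lemma t_ba0 : Lbstar R * La R = 0 := by
  have h := bstar_a_zero R; rwa [star_Lb] at h

lemma t_ck : La R * Lastar R + Lb R * Lbstar R = 1 := by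
  have h := ck_rel R; rwa [star_La, star_Lb] at h

lemma t_aa (x : L2 R) : Lastar R * (La R * x) = x := by
  rw [← mul_assoc, t_aa0, one_mul]

lemma t_bb (x : L2 R) : Lbstar R * (Lb R * x) = x := by
  rw [← mul_assoc, t_bb0, one_mul]

lemma t_ab (x : L2 R) : Lastar R * (Lb R * x) = 0 := by
  rw [← mul_assoc, t_ab0, zero_mul]

lemma t_ba (x : L2 R) : Lbstar R * (La R * x) = 0 := by
  rw [← mul_assoc, t_ba0, zero_mul]

end UnitaryLemmas


/-- The element `u = aaa* + aba*b* + bb*b*` of `L_{2,R}` is a unitary with full spectrum: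
`q(u) ≠ 0` for every nonzero polynomial `q ∈ R[x]`.  In particular `L_{2,R}` contains a
full spectrum unitary. -/
theorem full_spectrum_unitary
    (R : Type) [CommRing R] :
    (star (La R * La R * star (La R) + La R * Lb R * star (La R) * star (Lb R) +
          Lb R * star (Lb R) * star (Lb R)) *
        (La R * La R * star (La R) + La R * Lb R * star (La R) * star (Lb R) +
          Lb R * star (Lb R) * star (Lb R)) = 1) ∧
    ((La R * La R * star (La R) + La R * Lb R * star (La R) * star (Lb R) +
          Lb R * star (Lb R) * star (Lb R)) *
        star (La R * La R * star (La R) + La R * Lb R * star (La R) * star (Lb R) +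
          Lb R * star (Lb R) * star (Lb R)) = 1) ∧
    (∀ q : Polynomial R, q ≠ 0 →
      Polynomial.aeval
        (La R * La R * star (La R) + La R * Lb R * star (La R) * star (Lb R) +
          Lb R * star (Lb R) * star (Lb R)) q ≠ 0) := by
  classical
  refine ⟨?_, ?_, ?_⟩
  · simp only [star_add, star_mul, star_star, star_La, star_Lb, star_Lastar, star_Lbstar]
    simp only [mul_add, add_mul, mul_assoc]
    simp only [t_aa, t_bb, t_ab, t_ba, t_aa0, t_bb0, t_ab0, t_ba0,
      mul_zero, zero_mul, mul_one, one_mul, add_zero, zero_add]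
    have h1 : Lb R * (La R * (Lastar R * Lbstar R)) + Lb R * (Lb R * (Lbstar R * Lbstar R)) =
        Lb R * Lbstar R := by
      calc Lb R * (La R * (Lastar R * Lbstar R)) + Lb R * (Lb R * (Lbstar R * Lbstar R))
          = Lb R * ((La R * Lastar R + Lb R * Lbstar R) * Lbstar R) := by noncomm_ring
        _ = Lb R * Lbstar R := by rw [t_ck, one_mul]
    rw [add_assoc, h1, t_ck]
  · simp only [star_add, star_mul, star_star, star_La, star_Lb, star_Lastar, star_Lbstar]
    simp only [mul_add, add_mul, mul_assoc]
    simp only [t_aa, t_bb, t_ab, t_ba, t_aa0, t_bb0, t_ab0, t_ba0,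
      mul_zero, zero_mul, mul_one, one_mul, add_zero, zero_add]
    have h2 : La R * (La R * (Lastar R * Lastar R)) + La R * (Lb R * (Lbstar R * Lastar R)) =
        La R * Lastar R := by
      calc La R * (La R * (Lastar R * Lastar R)) + La R * (Lb R * (Lbstar R * Lastar R))
          = La R * ((La R * Lastar R + Lb R * Lbstar R) * Lastar R) := by noncomm_ring
        _ = La R * Lastar R := by rw [t_ck, one_mul]
    rw [h2, t_ck]
  · intro q hq hzero
    have h0 : Polynomial.aeval
        (L2FS.rep R (La R * La R * star (La R) + La R * Lb R * star (La R) * star (Lb R) +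
          Lb R * star (Lb R) * star (Lb R))) q = 0 := by
      rw [Polynomial.aeval_algHom_apply, hzero, map_zero]
    have hu : L2FS.rep R (La R * La R * star (La R) + La R * Lb R * star (La R) * star (Lb R) +
        Lb R * star (Lb R) * star (Lb R)) = L2FS.repU R := by
      simp only [map_add, map_mul, star_La, star_Lb, L2FS.rep_La, L2FS.rep_Lb,
        L2FS.rep_Lastar, L2FS.rep_Lbstar, L2FS.repU]
    rw [hu] at h0
    have key := congrArg
      (fun f : Module.End R (L2FS.M R) =>
        (f (Finsupp.single (L2FS.sq 1) (1 : R))) (L2FS.sq (q.natDegree + 1))) h0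
    simp only [Polynomial.aeval_eq_sum_range, LinearMap.sum_apply, LinearMap.smul_apply,
      L2FS.repU_pow, Finsupp.finset_sum_apply, Finsupp.smul_apply, Finsupp.single_apply,
      smul_eq_mul, mul_ite, mul_one, mul_zero, LinearMap.zero_apply, Finsupp.coe_zero,
      Pi.zero_apply, L2FS.sq_inj.eq_iff, add_left_inj] at key
    rw [Finset.sum_ite_eq' (Finset.range (q.natDegree + 1)) q.natDegree
      (fun i => q.coeff i)] at key
    simp only [Finset.mem_range, Nat.lt_succ_self, if_true] at key
    exact hq (Polynomial.leadingCoeff_eq_zero.mp key)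
end

section
/- Let R be a commutative ring with unit. Given pairwise orthogonal projections p_1, p_2, …, p_n in L_{2,R}, each Murray–von Neumann equivalent to 1, there exist elements t_1, t_2, …, t_n in L_{2,R} such that: (1) t_i* t_i = p_{i+1} for i < n and t_n* t_n = p_1; (2) t_i t_i* = p_i for all i; (3) t_i t_i* t_i = t_i for all i; and (4) v = t_1 t_2 ⋯ t_n is a full spectrum partial unitary with vv* = p_1 = v*v. -/
set_option synthInstance.maxHeartbeats 1000000
set_option maxHeartbeats 1000000

open FreeAlgebra

variable (R : Type) [CommRing R]

/-- A projection in an involutive algebra: `p = p² = p*`. -/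
def IsProjection {A : Type} [Mul A] [Star A] (p : A) : Prop :=
  p * p = p ∧ star p = p

/-- Murray–von Neumann equivalence of projections: `p ∼ q` iff there is `x` with
`p = xx*` and `q = x*x`. -/
def MvNEquiv {A : Type} [Mul A] [Star A] (p q : A) : Prop :=
  ∃ x : A, p = x * star x ∧ q = star x * x

/-- A full spectrum partial unitary `u`: `u*u = uu* = p` is a projection, and for every
nonzero polynomial `q(x) = Σ_n r_n x^n ∈ R[x]` the element
`q(u) = r_0 • p + Σ_{n ≥ 1} r_n • u^n` is nonzero. -/
def IsFullSpectrumPartialUnitary (R : Type) [CommRing R] {A : Type} [Ring A]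
    [Algebra R A] [Star A] (u : A) : Prop :=
  (star u * u = u * star u) ∧ IsProjection (u * star u) ∧
  ∀ q : Polynomial R, q ≠ 0 →
    (q.sum fun n r => r • (if n = 0 then u * star u else u ^ n)) ≠ 0

namespace L2Aux

open L2

variable (R : Type) [CommRing R]

lemma h1 : Lastar R * La R = 1 := by rw [← star_La]; exact astar_a R

lemma h2 : Lbstar R * Lb R = 1 := by rw [← star_Lb]; exact bstar_b R

lemma h3 : La R * Lastar R + Lb R * Lbstar R = 1 := by
  have := ck_rel R; rwa [star_La, star_Lb] at this

lemma r1 (x : L2 R) : Lastar R * (La R * x) = x := by rw [← mul_assoc, h1, one_mul]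

lemma r2 (x : L2 R) : Lbstar R * (Lb R * x) = x := by rw [← mul_assoc, h2, one_mul]

lemma astar_b : Lastar R * Lb R = 0 := by
  have key : Lastar R * Lb R = Lastar R * Lb R + Lastar R * Lb R := by
    conv_lhs => rw [← one_mul (Lb R), ← h3 R]
    simp only [mul_add, add_mul, mul_assoc]
    rw [r1, h2, mul_one]
  exact (left_eq_add.mp key)

lemma bstar_a : Lbstar R * La R = 0 := by
  have key : Lbstar R * La R = Lbstar R * La R + Lbstar R * La R := by
    conv_lhs => rw [← one_mul (La R), ← h3 R]
    simp only [mul_add, add_mul, mul_assoc]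
    rw [r2, h1, mul_one]
  exact (left_eq_add.mp key)

lemma r3 (x : L2 R) : Lastar R * (Lb R * x) = 0 := by rw [← mul_assoc, astar_b, zero_mul]

lemma r4 (x : L2 R) : Lbstar R * (La R * x) = 0 := by rw [← mul_assoc, bstar_a, zero_mul]

lemma r6 (x : L2 R) :
    La R * (La R * (Lastar R * x)) + La R * (Lb R * (Lbstar R * x)) = La R * x := by
  rw [← mul_add, ← mul_assoc (La R) (Lastar R), ← mul_assoc (Lb R) (Lbstar R), ← add_mul,
    h3, one_mul]

lemma r7 (x : L2 R) :
    Lb R * (La R * (Lastar R * x)) + Lb R * (Lb R * (Lbstar R * x)) = Lb R * x := by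
  rw [← mul_add, ← mul_assoc (La R) (Lastar R), ← mul_assoc (Lb R) (Lbstar R), ← add_mul,
    h3, one_mul]

/-- The full spectrum unitary `w = aaa* + ab(ba)* + b(bb)*` of `L_{2,R}`. -/
noncomputable def wU : L2 R :=
  La R * (La R * Lastar R) + La R * (Lb R * (Lastar R * Lbstar R)) +
    Lb R * (Lbstar R * Lbstar R)

lemma wU_mul_star : wU R * star (wU R) = 1 := by
  simp only [wU, star_add, star_mul, star_La, star_Lb, star_Lastar, star_Lbstar]
  simp only [mul_add, add_mul, mul_assoc, r1, r2, r3, r4, h1, h2, astar_b, bstar_a,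
    mul_zero, zero_mul, mul_one, add_zero, zero_add]
  rw [r6, h3]

lemma star_mul_wU : star (wU R) * wU R = 1 := by
  simp only [wU, star_add, star_mul, star_La, star_Lb, star_Lastar, star_Lbstar]
  simp only [mul_add, add_mul, mul_assoc, r1, r2, r3, r4, h1, h2, astar_b, bstar_a,
    mul_zero, zero_mul, mul_one, add_zero, zero_add]
  rw [add_assoc, r7, h3]

/-! ### A representation of `L_{2,R}` on `ℕ →₀ R` -/

/-- The linear endomorphism of `ℕ →₀ R` sending `single m r` to `r • f m`. -/
noncomputable def genOp (f : ℕ → (ℕ →₀ R)) : Module.End R (ℕ →₀ R) :=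
  Finsupp.lsum R fun m => LinearMap.toSpanSingleton R (ℕ →₀ R) (f m)

lemma genOp_single (f : ℕ → (ℕ →₀ R)) (m : ℕ) (r : R) :
    genOp R f (Finsupp.single m r) = r • f m := by
  simp [genOp, Finsupp.lsum_single, LinearMap.toSpanSingleton_apply]

/-- The operator representing `a`: `e_m ↦ e_{2m}`. -/
noncomputable def Aop : Module.End R (ℕ →₀ R) := genOp R fun m => Finsupp.single (2 * m) 1

/-- The operator representing `b`: `e_m ↦ e_{2m+1}`. -/
noncomputable def Bop : Module.End R (ℕ →₀ R) := genOp R fun m => Finsupp.single (2 * m + 1) 1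

/-- The operator representing `a*`. -/
noncomputable def Asop : Module.End R (ℕ →₀ R) :=
  genOp R fun m => if m % 2 = 0 then Finsupp.single (m / 2) 1 else 0

/-- The operator representing `b*`. -/
noncomputable def Bsop : Module.End R (ℕ →₀ R) :=
  genOp R fun m => if m % 2 = 1 then Finsupp.single (m / 2) 1 else 0

lemma Aop_single (m : ℕ) (r : R) : Aop R (Finsupp.single m r) = Finsupp.single (2 * m) r := by
  rw [Aop, genOp_single, Finsupp.smul_single', mul_one]

lemma Bop_single (m : ℕ) (r : R) :
    Bop R (Finsupp.single m r) = Finsupp.single (2 * m + 1) r := by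
  rw [Bop, genOp_single, Finsupp.smul_single', mul_one]

lemma Asop_single₀ (m : ℕ) (r : R) (h : m % 2 = 0) :
    Asop R (Finsupp.single m r) = Finsupp.single (m / 2) r := by
  rw [Asop, genOp_single, if_pos h, Finsupp.smul_single', mul_one]

lemma Asop_single₁ (m : ℕ) (r : R) (h : m % 2 = 1) :
    Asop R (Finsupp.single m r) = 0 := by
  rw [Asop, genOp_single, if_neg (by omega), smul_zero]

lemma Bsop_single₁ (m : ℕ) (r : R) (h : m % 2 = 1) :
    Bsop R (Finsupp.single m r) = Finsupp.single (m / 2) r := by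
  rw [Bsop, genOp_single, if_pos h, Finsupp.smul_single', mul_one]

lemma Bsop_single₀ (m : ℕ) (r : R) (h : m % 2 = 0) :
    Bsop R (Finsupp.single m r) = 0 := by
  rw [Bsop, genOp_single, if_neg (by omega), smul_zero]

lemma AsA : Asop R * Aop R = 1 := by
  refine Finsupp.lhom_ext fun m r => ?_
  rw [Module.End.mul_apply, Aop_single, Asop_single₀ _ _ _ (by omega), Module.End.one_apply]
  congr 1
  omega

lemma BsB : Bsop R * Bop R = 1 := by
  refine Finsupp.lhom_ext fun m r => ?_
  rw [Module.End.mul_apply, Bop_single, Bsop_single₁ _ _ _ (by omega), Module.End.one_apply]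
  congr 1
  omega

lemma CK : Aop R * Asop R + Bop R * Bsop R = 1 := by
  refine Finsupp.lhom_ext fun m r => ?_
  rw [LinearMap.add_apply, Module.End.mul_apply, Module.End.mul_apply, Module.End.one_apply]
  rcases Nat.mod_two_eq_zero_or_one m with h | h
  · rw [Asop_single₀ _ _ _ h, Bsop_single₀ _ _ _ h, map_zero, Aop_single, add_zero]
    congr 1
    omega
  · rw [Asop_single₁ _ _ _ h, Bsop_single₁ _ _ _ h, map_zero, Bop_single, zero_add]
    congr 1
    omega

/-- The interpretation of the generators. -/
noncomputable def genInterp : L2Gen → Module.End R (ℕ →₀ R)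
  | .a => Aop R
  | .astar => Asop R
  | .b => Bop R
  | .bstar => Bsop R

/-- The representation of `L_{2,R}` on `ℕ →₀ R`. -/
noncomputable def rep : L2 R →ₐ[R] Module.End R (ℕ →₀ R) :=
  RingQuot.liftAlgHom R
    ⟨FreeAlgebra.lift R (genInterp R), by
      intro x y h
      induction h with
      | a_adj =>
          rw [map_mul, map_one, FreeAlgebra.lift_ι_apply, FreeAlgebra.lift_ι_apply]
          exact AsA R
      | b_adj =>
          rw [map_mul, map_one, FreeAlgebra.lift_ι_apply, FreeAlgebra.lift_ι_apply]
          exact BsB R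
      | ck =>
          rw [map_one, map_add, map_mul, map_mul, FreeAlgebra.lift_ι_apply,
            FreeAlgebra.lift_ι_apply, FreeAlgebra.lift_ι_apply, FreeAlgebra.lift_ι_apply]
          exact CK R⟩

lemma rep_gen (g : L2Gen) :
    rep R (RingQuot.mkAlgHom R (L2Rel R) (FreeAlgebra.ι R g)) = genInterp R g := by
  simp [rep, RingQuot.liftAlgHom_mkAlgHom_apply]

lemma rep_La : rep R (La R) = Aop R := rep_gen R .a
lemma rep_Lb : rep R (Lb R) = Bop R := rep_gen R .b
lemma rep_Lastar : rep R (Lastar R) = Asop R := rep_gen R .astar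
lemma rep_Lbstar : rep R (Lbstar R) = Bsop R := rep_gen R .bstar

lemma rep_wU : rep R (wU R) =
    Aop R * (Aop R * Asop R) + Aop R * (Bop R * (Asop R * Bsop R)) +
      Bop R * (Bsop R * Bsop R) := by
  simp only [wU, map_add, map_mul, rep_La, rep_Lb, rep_Lastar, rep_Lbstar]

lemma rep_wU_single (j : ℕ) :
    rep R (wU R) (Finsupp.single (2 ^ j) (1 : R)) = Finsupp.single (2 ^ (j + 1)) 1 := by
  rw [rep_wU]
  simp only [LinearMap.add_apply, Module.End.mul_apply]
  cases j with
  | zero =>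
      rw [pow_zero]
      rw [Asop_single₁ _ _ _ (by omega), map_zero, map_zero,
        Bsop_single₁ _ _ _ (by omega), Bsop_single₀ _ _ _ (by omega), map_zero,
        Asop_single₀ _ _ _ (by omega), Bop_single, Aop_single]
      norm_num
  | succ k =>
      have h2 : 2 ^ (k + 1) = 2 * 2 ^ k := by rw [pow_succ, Nat.mul_comm]
      rw [h2]
      rw [Asop_single₀ _ _ _ (by omega), Bsop_single₀ _ _ _ (by omega)]
      simp only [map_zero, add_zero, Aop_single]
      congr 1
      have : 2 * 2 ^ k / 2 = 2 ^ k := by omega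
      rw [this, pow_succ, pow_succ]
      ring

lemma rep_wU_pow (j : ℕ) :
    ((rep R (wU R)) ^ j) (Finsupp.single 1 (1 : R)) = Finsupp.single (2 ^ j) 1 := by
  induction j with
  | zero => rw [pow_zero, Module.End.one_apply, pow_zero]
  | succ k ih => rw [pow_succ', Module.End.mul_apply, ih, rep_wU_single]

end L2Aux

open L2

open Fin.NatCast

/-- Given pairwise orthogonal projections `p_1, …, p_n` in `L_{2,R}`, each Murray–von
Neumann equivalent to `1`, there exist `t_1, …, t_n ∈ L_{2,R}` such that
(1) `t_i* t_i = p_{i+1}` (indices cyclic, so `t_n* t_n = p_1`); (2) `t_i t_i* = p_i`;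
(3) `t_i t_i* t_i = t_i`; and (4) `v = t_1 t_2 ⋯ t_n` is a full spectrum partial unitary
with `vv* = p_1 = v*v`. -/
theorem embed_loop_lemma
    (R : Type) [CommRing R] (n : ℕ) [NeZero n] (p : Fin n → L2 R)
    (hproj : ∀ i, IsProjection (p i))
    (horth : ∀ i j, i ≠ j → p i * p j = 0)
    (hequiv : ∀ i, MvNEquiv (p i) 1) :
    ∃ t : Fin n → L2 R,
      (∀ i, star (t i) * t i = p (i + 1)) ∧
      (∀ i, t i * star (t i) = p i) ∧
      (∀ i, t i * star (t i) * t i = t i) ∧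
      (List.ofFn t).prod * star ((List.ofFn t).prod) = p 0 ∧
      star ((List.ofFn t).prod) * (List.ofFn t).prod = p 0 ∧
      IsFullSpectrumPartialUnitary R ((List.ofFn t).prod) := by
  classical
  obtain ⟨m, rfl⟩ : ∃ m, n = m + 1 :=
    ⟨n - 1, (Nat.succ_pred_eq_of_pos (Nat.pos_of_ne_zero (NeZero.ne n))).symm⟩
  choose s hs1 hs2 using hequiv
  have hscan : ∀ i, star (s i) * s i = 1 := fun i => (hs2 i).symm
  have cancel : ∀ (x y z : L2 R), x * y = 1 → x * (y * z) = z := by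
    intro x y z h; rw [← mul_assoc, h, one_mul]
  set w : L2 R := L2Aux.wU R with hwdef
  have hw1 : w * star w = 1 := L2Aux.wU_mul_star R
  have hw2 : star w * w = 1 := L2Aux.star_mul_wU R
  set t : Fin (m + 1) → L2 R := fun i => s i * w * star (s (i + 1)) with ht
  have hcast : ∀ k : ℕ, ((k : Fin (m + 1)) + 1) = ((k + 1 : ℕ) : Fin (m + 1)) := by
    intro k; push_cast; ring
  have htnat : ∀ k : ℕ, t ((k : ℕ) : Fin (m + 1)) =
      s ((k : ℕ) : Fin (m + 1)) * w * star (s (((k + 1 : ℕ)) : Fin (m + 1))) := by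
    intro k
    simp only [ht]
    rw [hcast]
  have hc1 : ∀ i, star (t i) * t i = p (i + 1) := by
    intro i
    simp only [ht, star_mul, star_star, mul_assoc]
    rw [cancel _ _ _ (hscan i), cancel _ _ _ hw2, ← hs1 (i + 1)]
  have hc2 : ∀ i, t i * star (t i) = p i := by
    intro i
    simp only [ht, star_mul, star_star, mul_assoc]
    rw [cancel _ _ _ (hscan (i + 1)), cancel _ _ _ hw1, ← hs1 i]
  have hc3 : ∀ i, t i * star (t i) * t i = t i := by
    intro i
    rw [hc2 i, hs1 i]
    simp only [ht, mul_assoc]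
    rw [cancel _ _ _ (hscan i)]
  have key : ∀ (M k : ℕ),
      ((List.range (M + 1)).map fun j => t ((k + j : ℕ) : Fin (m + 1))).prod
        = s ((k : ℕ) : Fin (m + 1)) * w ^ (M + 1) *
            star (s (((k + M + 1 : ℕ)) : Fin (m + 1))) := by
    intro M
    induction M with
    | zero =>
        intro k
        simp only [List.range_succ, List.range_zero, List.map_append, List.map_cons,
          List.map_nil, List.prod_append, List.prod_cons, List.prod_nil, List.nil_append,
          mul_one, one_mul, Nat.zero_add, pow_one, Nat.add_zero]
        exact htnat k
    | succ M ih =>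
        intro k
        rw [List.range_succ, List.map_append, List.prod_append, ih]
        simp only [List.map_cons, List.map_nil, List.prod_cons, List.prod_nil, mul_one]
        rw [htnat (k + (M + 1))]
        simp only [← Nat.add_assoc]
        simp only [mul_assoc]
        rw [cancel _ _ _ (hscan _), ← mul_assoc (w ^ (M + 1)) w, ← pow_succ]
  have hofn : List.ofFn t = (List.range (m + 1)).map fun j => t ((0 + j : ℕ) : Fin (m + 1)) := by
    rw [List.ofFn_eq_map, ← List.map_coe_finRange_eq_range, List.map_map]
    congr 1
    funext i
    simp [Function.comp, Fin.cast_val_eq_self]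
  have hprod : (List.ofFn t).prod = s 0 * w ^ (m + 1) * star (s 0) := by
    rw [hofn, key m 0]
    norm_num
  have hpc1 : ∀ k : ℕ, w ^ k * (star w) ^ k = 1 := by
    intro k; induction k with
    | zero => simp
    | succ j ih => rw [pow_succ, pow_succ', mul_assoc, cancel _ _ _ hw1, ih]
  have hpc2 : ∀ k : ℕ, (star w) ^ k * w ^ k = 1 := by
    intro k; induction k with
    | zero => simp
    | succ j ih => rw [pow_succ, pow_succ', mul_assoc, cancel _ _ _ hw2, ih]
  have hvstar : star ((List.ofFn t).prod) = s 0 * ((star w) ^ (m + 1) * star (s 0)) := by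
    rw [hprod]
    simp only [star_mul, star_star, star_pow, mul_assoc]
  have hvv : (List.ofFn t).prod * star ((List.ofFn t).prod) = p 0 := by
    rw [hvstar, hprod]
    simp only [mul_assoc]
    rw [cancel _ _ _ (hscan 0), cancel _ _ _ (hpc1 (m + 1)), ← hs1 0]
  have hvv' : star ((List.ofFn t).prod) * (List.ofFn t).prod = p 0 := by
    rw [hvstar, hprod]
    simp only [mul_assoc]
    rw [cancel _ _ _ (hscan 0), cancel _ _ _ (hpc2 (m + 1)), ← hs1 0]
  have hvpow : ∀ k : ℕ, (List.ofFn t).prod ^ (k + 1)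
      = s 0 * w ^ ((m + 1) * (k + 1)) * star (s 0) := by
    intro k; induction k with
    | zero => rw [pow_one, hprod, Nat.mul_one]
    | succ j ih =>
        rw [pow_succ, ih, hprod]  -- order ok: ih rewrites v^(j+1) first
        simp only [mul_assoc]
        rw [cancel _ _ _ (hscan 0), ← mul_assoc (w ^ ((m + 1) * (j + 1))), ← pow_add]
        have hE : (m + 1) * (j + 1) + (m + 1) = (m + 1) * (j + 1 + 1) := by ring
        rw [hE]
  refine ⟨t, hc1, hc2, hc3, hvv, hvv', ?_, ?_, ?_⟩
  · rw [hvv, hvv']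
  · rw [hvv]; exact hproj 0
  · intro q hq hzero
    set Y : L2 R := q.sum fun k r => r • w ^ ((m + 1) * k) with hY
    have hfact : (q.sum fun k r => r • (if k = 0 then
          (List.ofFn t).prod * star ((List.ofFn t).prod) else (List.ofFn t).prod ^ k))
        = s 0 * Y * star (s 0) := by
      rw [hY, Polynomial.sum_def, Polynomial.sum_def, Finset.mul_sum, Finset.sum_mul]
      refine Finset.sum_congr rfl fun k _ => ?_
      rcases k with _ | j
      · rw [if_pos rfl, hvv, hs1 0, Nat.mul_zero, pow_zero]
        simp only [mul_smul_comm, smul_mul_assoc, mul_one]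
      · rw [if_neg (Nat.succ_ne_zero j), hvpow j]
        simp only [mul_smul_comm, smul_mul_assoc]
    rw [hfact] at hzero
    have hY0 : Y = 0 := by
      calc Y = (star (s 0) * s 0) * Y * (star (s 0) * s 0) := by
              rw [hscan 0, one_mul, mul_one]
        _ = star (s 0) * (s 0 * Y * star (s 0)) * s 0 := by simp only [mul_assoc]
        _ = 0 := by rw [hzero, mul_zero, zero_mul]
    have hrep : (∑ k ∈ q.support, Finsupp.single (2 ^ ((m + 1) * k)) (q.coeff k))
        = (0 : ℕ →₀ R) := by
      have h1 : L2Aux.rep R Y (Finsupp.single 1 (1 : R)) = 0 := by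
        rw [hY0, map_zero, LinearMap.zero_apply]
      rw [← h1, hY, Polynomial.sum_def, map_sum, LinearMap.sum_apply]
      refine Finset.sum_congr rfl fun k _ => ?_
      rw [map_smul, LinearMap.smul_apply, map_pow, hwdef, L2Aux.rep_wU_pow,
        Finsupp.smul_single', mul_one]
    have hd := Polynomial.natDegree_mem_support_of_nonzero hq
    have heval := congrArg (fun F : ℕ →₀ R => F (2 ^ ((m + 1) * q.natDegree))) hrep
    simp only [Finsupp.finset_sum_apply, Finsupp.coe_zero, Pi.zero_apply] at heval
    rw [Finset.sum_eq_single q.natDegree] at heval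
    · rw [Finsupp.single_apply, if_pos rfl] at heval
      exact (Polynomial.mem_support_iff.mp hd) heval
    · intro k _ hne
      rw [Finsupp.single_apply, if_neg]
      intro h
      apply hne
      have h2 := Nat.pow_right_injective (le_refl 2) h
      exact Nat.eq_of_mul_eq_mul_left (Nat.succ_pos m) h2
    · intro h; exact absurd hd h
end

section
/- Let R be a commutative ring with unit and let 𝒯 be the Toeplitz graph with two vertices u, v, a loop e at u, and an edge f from u to v. Then the assignment u ↦ aa*, v ↦ bb*, e ↦ aaa*, f ↦ abb* extends to a unital injective *-algebra homomorphism L_R(𝒯) → L_{2,R}. -/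
set_option synthInstance.maxHeartbeats 1000000
set_option maxHeartbeats 1000000

/-- A directed graph `E = (E⁰, E¹, r, s)`. -/
structure LPGraph : Type 1 where
  V : Type
  E : Type
  src : E → V
  rng : E → V

namespace LPGraph

/-- Generators of the Leavitt path algebra: vertices, (real) edges and ghost edges. -/
inductive LGen (G : LPGraph) : Type
  | vert : G.V → LGen G
  | edge : G.E → LGen G
  | ghost : G.E → LGen G

variable (G : LPGraph) (R : Type) [CommRing R]

open FreeAlgebra

/-- The defining relations of the Leavitt path algebra of `G` over `R`. -/
inductive LeavittRel : FreeAlgebra R (LGen G) → FreeAlgebra R (LGen G) → Prop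
  | vert_self (v : G.V) :
      LeavittRel (ι R (.vert v) * ι R (.vert v)) (ι R (.vert v))
  | vert_ne {v w : G.V} (h : v ≠ w) :
      LeavittRel (ι R (.vert v) * ι R (.vert w)) 0
  | src_edge (e : G.E) :
      LeavittRel (ι R (.vert (G.src e)) * ι R (.edge e)) (ι R (.edge e))
  | edge_rng (e : G.E) :
      LeavittRel (ι R (.edge e) * ι R (.vert (G.rng e))) (ι R (.edge e))
  | rng_ghost (e : G.E) :
      LeavittRel (ι R (.vert (G.rng e)) * ι R (.ghost e)) (ι R (.ghost e))
  | ghost_src (e : G.E) :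
      LeavittRel (ι R (.ghost e) * ι R (.vert (G.src e))) (ι R (.ghost e))
  | ghost_edge_self (e : G.E) :
      LeavittRel (ι R (.ghost e) * ι R (.edge e)) (ι R (.vert (G.rng e)))
  | ghost_edge_ne {e f : G.E} (h : e ≠ f) :
      LeavittRel (ι R (.ghost e) * ι R (.edge f)) 0
  | cuntz_krieger (v : G.V) (h : {e : G.E | G.src e = v}.Finite)
      (hne : {e : G.E | G.src e = v}.Nonempty) :
      LeavittRel (ι R (.vert v)) (∑ e ∈ h.toFinset, ι R (.edge e) * ι R (.ghost e))

/-- The ambient unital algebra: the quotient of the free algebra by the Leavitt relations.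
The Leavitt path algebra itself is the non-unital subalgebra generated by the
generators (for graphs with finitely many vertices it is unital with unit the sum
of the vertices, but this unit differs from the unit of the ambient algebra). -/
abbrev LeavittAmbient : Type := RingQuot (LeavittRel G R)

/-- The vertex idempotents, in the ambient algebra. -/
def av (v : G.V) : LeavittAmbient G R := RingQuot.mkAlgHom R (LeavittRel G R) (ι R (.vert v))

/-- The edge elements, in the ambient algebra. -/
def ae (e : G.E) : LeavittAmbient G R := RingQuot.mkAlgHom R (LeavittRel G R) (ι R (.edge e))

/-- The ghost edge elements, in the ambient algebra. -/
def ag (e : G.E) : LeavittAmbient G R := RingQuot.mkAlgHom R (LeavittRel G R) (ι R (.ghost e))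

/-- The generating set of the Leavitt path algebra inside the ambient algebra. -/
def genSet : Set (LeavittAmbient G R) :=
  Set.range (av G R) ∪ Set.range (ae G R) ∪ Set.range (ag G R)

/-- The involution on the generators: it fixes vertices and exchanges real and ghost
edges. -/
def starGen : LGen G → LGen G
  | .vert v => .vert v
  | .edge e => .ghost e
  | .ghost e => .edge e

/-- The auxiliary algebra homomorphism from the free algebra to the opposite of the
ambient algebra, implementing the involution on the generators. -/
noncomputable def preStar : FreeAlgebra R (LGen G) →ₐ[R] (LeavittAmbient G R)ᵐᵒᵖ :=
  FreeAlgebra.lift R fun g =>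
    MulOpposite.op (RingQuot.mkAlgHom R (LeavittRel G R) (ι R (starGen G g)))

lemma preStar_ι (g : LGen G) :
    preStar G R (ι R g) =
      MulOpposite.op (RingQuot.mkAlgHom R (LeavittRel G R) (ι R (starGen G g))) := by
  rw [preStar, FreeAlgebra.lift_ι_apply]

lemma preStar_mul_ι (g h : LGen G) :
    preStar G R (ι R g * ι R h) =
      MulOpposite.op (RingQuot.mkAlgHom R (LeavittRel G R)
        (ι R (starGen G h) * ι R (starGen G g))) := by
  rw [map_mul, preStar_ι, preStar_ι, ← MulOpposite.op_mul, ← map_mul]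

lemma preStar_rel {x y : FreeAlgebra R (LGen G)} (h : LeavittRel G R x y) :
    preStar G R x = preStar G R y := by
  induction h with
  | vert_self v =>
      rw [preStar_mul_ι, preStar_ι]
      simp only [starGen]
      exact congrArg _ (RingQuot.mkAlgHom_rel R (LeavittRel.vert_self v))
  | vert_ne h =>
      rw [preStar_mul_ι, map_zero]
      simp only [starGen]
      rw [RingQuot.mkAlgHom_rel R (LeavittRel.vert_ne (Ne.symm h)), map_zero,
        MulOpposite.op_zero]
  | src_edge e =>
      rw [preStar_mul_ι, preStar_ι]
      simp only [starGen]
      exact congrArg _ (RingQuot.mkAlgHom_rel R (LeavittRel.ghost_src e))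
  | edge_rng e =>
      rw [preStar_mul_ι, preStar_ι]
      simp only [starGen]
      exact congrArg _ (RingQuot.mkAlgHom_rel R (LeavittRel.rng_ghost e))
  | rng_ghost e =>
      rw [preStar_mul_ι, preStar_ι]
      simp only [starGen]
      exact congrArg _ (RingQuot.mkAlgHom_rel R (LeavittRel.edge_rng e))
  | ghost_src e =>
      rw [preStar_mul_ι, preStar_ι]
      simp only [starGen]
      exact congrArg _ (RingQuot.mkAlgHom_rel R (LeavittRel.src_edge e))
  | ghost_edge_self e =>
      rw [preStar_mul_ι, preStar_ι]
      simp only [starGen]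
      exact congrArg _ (RingQuot.mkAlgHom_rel R (LeavittRel.ghost_edge_self e))
  | ghost_edge_ne h =>
      rw [preStar_mul_ι, map_zero]
      simp only [starGen]
      rw [RingQuot.mkAlgHom_rel R (LeavittRel.ghost_edge_ne (Ne.symm h)), map_zero,
        MulOpposite.op_zero]
  | cuntz_krieger v h hne =>
      rw [preStar_ι, map_sum]
      simp only [preStar_mul_ι, starGen]
      rw [← Finset.op_sum, ← map_sum]
      exact congrArg _ (RingQuot.mkAlgHom_rel R (LeavittRel.cuntz_krieger v h hne))

/-- The auxiliary algebra homomorphism `L → Lᵐᵒᵖ` implementing the involution on the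
ambient algebra. -/
noncomputable def starMapAux : LeavittAmbient G R →ₐ[R] (LeavittAmbient G R)ᵐᵒᵖ :=
  RingQuot.liftAlgHom R ⟨preStar G R, fun _ _ h => preStar_rel G R h⟩

lemma starMapAux_mk (x : FreeAlgebra R (LGen G)) :
    starMapAux G R (RingQuot.mkAlgHom R (LeavittRel G R) x) = preStar G R x := by
  rw [starMapAux, RingQuot.liftAlgHom_mkAlgHom_apply]

lemma starMapAux_gen (g : LGen G) :
    starMapAux G R (RingQuot.mkAlgHom R (LeavittRel G R) (ι R g)) =
      MulOpposite.op (RingQuot.mkAlgHom R (LeavittRel G R) (ι R (starGen G g))) := by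
  rw [starMapAux_mk, preStar_ι]

lemma starMapAux_starMapAux (x : LeavittAmbient G R) :
    (starMapAux G R ((starMapAux G R x).unop)).unop = x := by
  obtain ⟨y, rfl⟩ := RingQuot.mkAlgHom_surjective R (LeavittRel G R) x
  induction y using FreeAlgebra.induction with
  | grade0 r =>
      simp only [AlgHom.commutes, MulOpposite.algebraMap_apply, MulOpposite.unop_op]
  | grade1 g =>
      rw [starMapAux_gen, MulOpposite.unop_op, starMapAux_gen, MulOpposite.unop_op]
      cases g <;> rfl
  | mul x y ihx ihy =>
      rw [map_mul, map_mul, MulOpposite.unop_mul, map_mul, MulOpposite.unop_mul, ihx, ihy]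
  | add x y ihx ihy =>
      rw [map_add, map_add, MulOpposite.unop_add, map_add, MulOpposite.unop_add, ihx, ihy]

/-- The involution making the ambient algebra (and hence `L_R(E)`) a `*`-ring; it fixes
the vertices and `R`, and exchanges real and ghost edges. -/
noncomputable instance instStarRing : StarRing (LeavittAmbient G R) where
  star x := (starMapAux G R x).unop
  star_involutive x := starMapAux_starMapAux G R x
  star_mul x y := by
    show (starMapAux G R (x * y)).unop =
      (starMapAux G R y).unop * (starMapAux G R x).unop
    rw [map_mul, MulOpposite.unop_mul]
  star_add x y := by
    show (starMapAux G R (x + y)).unop =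
      (starMapAux G R x).unop + (starMapAux G R y).unop
    rw [map_add, MulOpposite.unop_add]

lemma star_def (x : LeavittAmbient G R) : star x = (starMapAux G R x).unop := rfl

@[simp] lemma star_av (v : G.V) : star (av G R v) = av G R v := by
  rw [star_def, av, starMapAux_gen, MulOpposite.unop_op]; rfl

@[simp] lemma star_ae (e : G.E) : star (ae G R e) = ag G R e := by
  rw [star_def, ae, ag, starMapAux_gen, MulOpposite.unop_op]; rfl

@[simp] lemma star_ag (e : G.E) : star (ag G R e) = ae G R e := by
  rw [star_def, ae, ag, starMapAux_gen, MulOpposite.unop_op]; rfl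

/-- The involution on the ambient algebra is `R`-linear. -/
lemma star_smul' (r : R) (x : LeavittAmbient G R) : star (r • x) = r • star x := by
  show (starMapAux G R (r • x)).unop = r • (starMapAux G R x).unop
  rw [map_smul, MulOpposite.unop_smul]

/-- The Leavitt path algebra `L_R(E)`: the non-unital `*`-subalgebra of the ambient
algebra generated by the vertices, edges and ghost edges. -/
noncomputable def LPA : NonUnitalStarSubalgebra R (LeavittAmbient G R) where
  toNonUnitalSubalgebra := NonUnitalAlgebra.adjoin R (genSet G R)
  star_mem' := by
    intro a ha
    replace ha : a ∈ NonUnitalAlgebra.adjoin R (genSet G R) := ha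
    show star a ∈ NonUnitalAlgebra.adjoin R (genSet G R)
    induction ha using NonUnitalAlgebra.adjoin_induction with
    | mem x hx =>
        apply NonUnitalAlgebra.subset_adjoin R
        rcases hx with (⟨v, rfl⟩ | ⟨e, rfl⟩) | ⟨e, rfl⟩
        · rw [star_av]; exact Or.inl (Or.inl ⟨v, rfl⟩)
        · rw [star_ae]; exact Or.inr ⟨e, rfl⟩
        · rw [star_ag]; exact Or.inl (Or.inr ⟨e, rfl⟩)
    | add x y hx hy ihx ihy => rw [star_add]; exact add_mem ihx ihy
    | zero => rw [star_zero]; exact zero_mem _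
    | mul x y hx hy ihx ihy => rw [star_mul]; exact mul_mem ihy ihx
    | smul r x hx ih => rw [star_smul']; exact SMulMemClass.smul_mem r ih

/-- The vertex idempotent `v ∈ L_R(E)`. -/
def lv (v : G.V) : LPA G R :=
  ⟨av G R v, NonUnitalAlgebra.subset_adjoin R (Or.inl (Or.inl ⟨v, rfl⟩))⟩

/-- The edge element `e ∈ L_R(E)`. -/
def le (e : G.E) : LPA G R :=
  ⟨ae G R e, NonUnitalAlgebra.subset_adjoin R (Or.inl (Or.inr ⟨e, rfl⟩))⟩

/-- The ghost edge element `e* ∈ L_R(E)`. -/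
def lg (e : G.E) : LPA G R :=
  ⟨ag G R e, NonUnitalAlgebra.subset_adjoin R (Or.inr ⟨e, rfl⟩)⟩

variable {G}

/-- `IsPathFrom G u w es` means that the list of edges `es` is a path from `u` to `w`;
for the empty list this means `u = w`. -/
def IsPathFrom : G.V → G.V → List G.E → Prop
  | u, w, [] => u = w
  | u, w, e :: es => G.src e = u ∧ IsPathFrom (G.rng e) w es

/-- `IsCycleAt G u c` means `c` is a cycle based at `u`: a path of positive
length from `u` to `u`. -/
def IsCycleAt (u : G.V) (c : List G.E) : Prop :=
  c ≠ [] ∧ IsPathFrom u u c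

/-- A path (given as a list of edges) has an exit if some edge `f` of the graph has the same
source as some edge of the path, but is distinct from it. -/
def HasExit (c : List G.E) : Prop :=
  ∃ e ∈ c, ∃ f : G.E, G.src f = G.src e ∧ f ≠ e

variable (G)

/-- Product of a nonempty list of edges in `L_R(E)`. -/
noncomputable def edgeProd : G.E → List G.E → LPA G R
  | e, [] => le G R e
  | e, f :: es => le G R e * edgeProd f es

/-- The element of `L_R(E)` associated to a path: the product of the edges,
or the vertex `u` for a trivial path at `u`. -/
noncomputable def pathElem (u : G.V) : List G.E → LPA G R
  | [] => lv G R u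
  | e :: es => edgeProd G R e es

/-- Product of the ghost edges of a nonempty list of edges, in reverse order. -/
noncomputable def ghostProd : G.E → List G.E → LPA G R
  | e, [] => lg G R e
  | e, f :: es => ghostProd f es * lg G R e

/-- The element `γ*` of `L_R(E)` associated to a path `γ`: the product of the ghost
edges in reverse order, or the vertex `u` for a trivial path at `u`. -/
noncomputable def ghostElem (u : G.V) : List G.E → LPA G R
  | [] => lv G R u
  | e :: es => ghostProd G R e es

/-- `cpow x n = x ^ (n + 1)`, the (n+1)-st power in the non-unital algebra `L_R(E)`. -/
noncomputable def cpow (x : LPA G R) : ℕ → LPA G R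
  | 0 => x
  | n + 1 => x * cpow x n

/-- For a polynomial `q(z) = Σ_{n} r_n z^n`, a vertex idempotent `p` and an element `x`,
`polyCyc G R q p x = r_0 • p + Σ_{n ≥ 1} r_n • x ^ n`.  This is the element `q(α)` when
`p` is the base vertex of a cycle `α` with `x` the corresponding element. -/
noncomputable def polyCyc (q : Polynomial R) (p x : LPA G R) : LPA G R :=
  q.sum fun n r => r • (if n = 0 then p else cpow G R x (n - 1))

end LPGraph

open FreeAlgebra

variable (R : Type) [CommRing R]

open LPGraph

/-- The Toeplitz graph `𝒯`: vertices `u = false` and `v = true`, a loop `e = false` at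
`u` and an edge `f = true` from `u` to `v`. -/
def toeplitzGraph : LPGraph :=
  ⟨Bool, Bool, fun _ => false, fun x => x⟩


namespace ToepAux

variable (R : Type) [CommRing R]

/-! ### Basic identities in `L_{2,R}` -/

lemma h_aa : Lastar R * La R = 1 := by rw [← L2.star_La, L2.astar_a]

lemma h_bb : Lbstar R * Lb R = 1 := by rw [← L2.star_Lb, L2.bstar_b]

lemma h_ck : La R * Lastar R + Lb R * Lbstar R = 1 := by
  rw [← L2.star_La, ← L2.star_Lb, L2.ck_rel]

lemma h_aa' (x : L2 R) : Lastar R * (La R * x) = x := by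
  rw [← mul_assoc, h_aa, one_mul]

lemma h_bb' (x : L2 R) : Lbstar R * (Lb R * x) = x := by
  rw [← mul_assoc, h_bb, one_mul]

lemma h_ab : Lastar R * Lb R = 0 := by
  have h1 : Lastar R * ((La R * Lastar R + Lb R * Lbstar R) * Lb R) = Lastar R * Lb R := by
    rw [h_ck, one_mul]
  rw [add_mul, mul_add, mul_assoc, mul_assoc, h_aa', h_bb, mul_one] at h1
  exact (add_eq_left).mp h1

lemma h_ba : Lbstar R * La R = 0 := by
  have h1 : Lbstar R * ((La R * Lastar R + Lb R * Lbstar R) * La R) = Lbstar R * La R := by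
    rw [h_ck, one_mul]
  rw [add_mul, mul_add, mul_assoc (La R), h_aa, mul_one, mul_assoc (Lb R), h_bb'] at h1
  exact (add_eq_left).mp h1

lemma h_ab' (x : L2 R) : Lastar R * (Lb R * x) = 0 := by
  rw [← mul_assoc, h_ab, zero_mul]

lemma h_ba' (x : L2 R) : Lbstar R * (La R * x) = 0 := by
  rw [← mul_assoc, h_ba, zero_mul]

/-! ### A representation of `L_{2,R}` on the free module on infinite binary sequences -/

/-- Tail of a sequence. -/
def tl (σ : ℕ → Bool) : ℕ → Bool := fun n => σ (n + 1)

/-- Cons of a bit onto a sequence. -/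
def cns (b : Bool) (σ : ℕ → Bool) : ℕ → Bool := fun n => match n with
  | 0 => b
  | k + 1 => σ k

@[simp] lemma tl_cns (b : Bool) (σ : ℕ → Bool) : tl (cns b σ) = σ := rfl

lemma cns_tl (σ : ℕ → Bool) : cns (σ 0) (tl σ) = σ := by
  funext n; cases n <;> rfl

lemma cns_injective (b : Bool) : Function.Injective (cns b) := by
  intro σ τ h
  funext n
  exact congrFun h (n + 1)

/-- The free module on which `L_{2,R}` acts. -/
abbrev VV : Type := (ℕ → Bool) →₀ R

noncomputable def Aop : VV R →ₗ[R] VV R := Finsupp.lmapDomain R R (cns false)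

noncomputable def Bop : VV R →ₗ[R] VV R := Finsupp.lmapDomain R R (cns true)

noncomputable def Aop' : VV R →ₗ[R] VV R :=
  Finsupp.lsum R fun σ => if σ 0 = false then Finsupp.lsingle (tl σ) else 0

noncomputable def Bop' : VV R →ₗ[R] VV R :=
  Finsupp.lsum R fun σ => if σ 0 = true then Finsupp.lsingle (tl σ) else 0

@[simp] lemma Aop_single (σ : ℕ → Bool) (r : R) :
    Aop R (Finsupp.single σ r) = Finsupp.single (cns false σ) r := by
  simp [Aop, Finsupp.lmapDomain_apply, Finsupp.mapDomain_single]

@[simp] lemma Bop_single (σ : ℕ → Bool) (r : R) :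
    Bop R (Finsupp.single σ r) = Finsupp.single (cns true σ) r := by
  simp [Bop, Finsupp.lmapDomain_apply, Finsupp.mapDomain_single]

lemma Aop'_single (σ : ℕ → Bool) (r : R) :
    Aop' R (Finsupp.single σ r) =
      if σ 0 = false then Finsupp.single (tl σ) r else 0 := by
  rw [Aop', Finsupp.lsum_single]
  split <;> simp_all

lemma Bop'_single (σ : ℕ → Bool) (r : R) :
    Bop' R (Finsupp.single σ r) =
      if σ 0 = true then Finsupp.single (tl σ) r else 0 := by
  rw [Bop', Finsupp.lsum_single]
  split <;> simp_all

/-- The generator map for the representation. -/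
noncomputable def repGen : L2Gen → Module.End R (VV R)
  | .a => Aop R
  | .astar => Aop' R
  | .b => Bop R
  | .bstar => Bop' R

/-- The representation of `L_{2,R}` on `VV R`. -/
noncomputable def rep : L2 R →ₐ[R] Module.End R (VV R) :=
  RingQuot.liftAlgHom R ⟨FreeAlgebra.lift R (repGen R), by
    intro x y h
    induction h with
    | a_adj =>
        rw [map_one, map_mul, FreeAlgebra.lift_ι_apply, FreeAlgebra.lift_ι_apply]
        refine Finsupp.lhom_ext fun σ r => ?_
        show Aop' R (Aop R (Finsupp.single σ r)) = Finsupp.single σ r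
        rw [Aop_single, Aop'_single]
        simp [cns]
    | b_adj =>
        rw [map_one, map_mul, FreeAlgebra.lift_ι_apply, FreeAlgebra.lift_ι_apply]
        refine Finsupp.lhom_ext fun σ r => ?_
        show Bop' R (Bop R (Finsupp.single σ r)) = Finsupp.single σ r
        rw [Bop_single, Bop'_single]
        simp [cns]
    | ck =>
        rw [map_one, map_add, map_mul, map_mul, FreeAlgebra.lift_ι_apply,
          FreeAlgebra.lift_ι_apply, FreeAlgebra.lift_ι_apply, FreeAlgebra.lift_ι_apply]
        refine Finsupp.lhom_ext fun σ r => ?_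
        show Aop R (Aop' R (Finsupp.single σ r)) + Bop R (Bop' R (Finsupp.single σ r)) =
          Finsupp.single σ r
        rw [Aop'_single, Bop'_single]
        cases h : σ 0 <;>
          simp [h, cns_tl, h ▸ cns_tl σ]⟩

lemma rep_La : rep R (La R) = Aop R := by
  rw [rep, La, RingQuot.liftAlgHom_mkAlgHom_apply, FreeAlgebra.lift_ι_apply]; rfl

lemma rep_Lastar : rep R (Lastar R) = Aop' R := by
  rw [rep, Lastar, RingQuot.liftAlgHom_mkAlgHom_apply, FreeAlgebra.lift_ι_apply]; rfl

/-! ### Linear independence of `a^m (a*)^n` -/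

/-- The sequence with `k` `false`s followed by `true`s. -/
def sk (k : ℕ) : ℕ → Bool := fun i => decide (k ≤ i)

lemma sk_injective : Function.Injective sk := by
  intro k l h
  have h1 := congrFun h k
  have h2 := congrFun h l
  simp [sk, decide_eq_decide] at h1 h2
  omega

lemma cns_false_sk (k : ℕ) : cns false (sk k) = sk (k + 1) := by
  funext n
  cases n with
  | zero => simp [cns, sk]
  | succ m => simp [cns, sk, Nat.succ_le_succ_iff]

lemma tl_sk (k : ℕ) : tl (sk (k + 1)) = sk k := by
  funext n
  simp [tl, sk, Nat.succ_le_succ_iff]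

lemma Aop_pow_single (m k : ℕ) (r : R) :
    (Aop R ^ m) (Finsupp.single (sk k) r) = Finsupp.single (sk (k + m)) r := by
  induction m with
  | zero => simp
  | succ n ih =>
      rw [pow_succ', Module.End.mul_apply, ih, Aop_single, cns_false_sk, ← Nat.add_assoc]

lemma Aop'_pow_single (n k : ℕ) (r : R) :
    (Aop' R ^ n) (Finsupp.single (sk k) r) =
      if n ≤ k then Finsupp.single (sk (k - n)) r else 0 := by
  induction n generalizing k with
  | zero => simp
  | succ n ih =>
      rw [pow_succ, Module.End.mul_apply, Aop'_single]
      cases k with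
      | zero =>
          have : sk 0 0 = true := by simp [sk]
          rw [this]
          simp
      | succ k =>
          have : sk (k+1) 0 = false := by simp [sk]
          rw [this, if_pos rfl, tl_sk, ih]
          by_cases h : n ≤ k
          · rw [if_pos h, if_pos (Nat.succ_le_succ h), Nat.succ_sub_succ]
          · rw [if_neg h, if_neg (by omega)]


lemma indep : LinearIndependent R (fun p : ℕ × ℕ => La R ^ p.1 * Lastar R ^ p.2) := by
  rw [linearIndependent_iff]
  intro l hl
  have h1 : l.sum (fun p r => r • (Aop R ^ p.1 * Aop' R ^ p.2)) = (0 : Module.End R (VV R)) := by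
    have h := congrArg (rep R) hl
    rw [map_zero, Finsupp.linearCombination_apply, map_finsuppSum] at h
    simpa only [map_smul, map_mul, map_pow, rep_La, rep_Lastar] using h
  have key : ∀ n m : ℕ, l (m, n) = 0 := by
    intro n
    induction n using Nat.strong_induction_on with
    | _ n ih =>
      intro m
      have h2 : ∑ p ∈ l.support,
          l p • ((Aop R ^ p.1 * Aop' R ^ p.2) (Finsupp.single (sk n) (1 : R))) = 0 := by
        have h := DFunLike.congr_fun h1 (Finsupp.single (sk n) (1 : R))
        rw [Finsupp.sum] at h
        simpa only [LinearMap.sum_apply, LinearMap.smul_apply, LinearMap.zero_apply] using h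
      have h3 : ∑ p ∈ l.support,
          (l p • ((Aop R ^ p.1 * Aop' R ^ p.2) (Finsupp.single (sk n) (1 : R)))) (sk m) = 0 := by
        rw [← Finsupp.finset_sum_apply, h2, Finsupp.zero_apply]
      have h4 : ∀ p ∈ l.support,
          (l p • ((Aop R ^ p.1 * Aop' R ^ p.2) (Finsupp.single (sk n) (1 : R)))) (sk m)
            = if p = (m, n) then l (m, n) else 0 := by
        rintro ⟨pm, pn⟩ _
        rw [Module.End.mul_apply, Aop'_pow_single]
        rcases lt_trichotomy pn n with hlt | heq | hgt
        · rw [ih pn hlt pm, zero_smul, Finsupp.zero_apply,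
            if_neg (by simp only [Prod.mk.injEq]; rintro ⟨-, rfl⟩; exact lt_irrefl _ hlt)]
        · rw [if_pos heq.le, heq, Nat.sub_self, Aop_pow_single, Nat.zero_add,
            Finsupp.smul_apply]
          by_cases hm : pm = m
          · subst hm
            rw [Finsupp.single_eq_same, if_pos rfl, smul_eq_mul, mul_one]
          · rw [Finsupp.single_eq_of_ne (fun hc => hm (sk_injective hc).symm), smul_zero,
              if_neg (by simp only [Prod.mk.injEq]; rintro ⟨rfl, -⟩; exact hm rfl)]
        · rw [if_neg (by omega), map_zero, smul_zero, Finsupp.zero_apply,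
            if_neg (by simp only [Prod.mk.injEq]; rintro ⟨-, rfl⟩; exact lt_irrefl _ hgt)]
      rw [Finset.sum_congr rfl h4, Finset.sum_ite_eq' l.support (m, n) (fun _ => l (m, n))] at h3
      by_cases hmem : (m, n) ∈ l.support
      · rwa [if_pos hmem] at h3
      · exact Finsupp.notMem_support_iff.mp hmem
  ext ⟨m, n⟩
  exact key n m


/-! ### The homomorphism from the ambient Leavitt algebra to `L_{2,R}` -/

lemma toep_src (e : Bool) : toeplitzGraph.src e = false := rfl

lemma toep_rng (e : Bool) : toeplitzGraph.rng e = e := rfl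

/-- Images of the Leavitt generators of the Toeplitz graph in `L_{2,R}`. -/
noncomputable def genMap : LGen toeplitzGraph → L2 R
  | .vert v => cond v (Lb R * Lbstar R) (La R * Lastar R)
  | .edge e => cond e (La R * (Lb R * Lbstar R)) (La R * (La R * Lastar R))
  | .ghost e => cond e (Lb R * (Lbstar R * Lastar R)) (La R * (Lastar R * Lastar R))

noncomputable def Phi : LeavittAmbient toeplitzGraph R →ₐ[R] L2 R :=
  RingQuot.liftAlgHom R ⟨FreeAlgebra.lift R (genMap R), by
    intro x y hxy
    induction hxy with
    | vert_self v => cases v <;> simp only [map_mul, map_zero, FreeAlgebra.lift_ι_apply, genMap, toep_src, toep_rng,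
            cond_false, cond_true, mul_assoc, h_aa', h_bb', h_ab', h_ba', mul_zero, zero_mul,
            mul_one]
    | @vert_ne v w hvw =>
        cases v <;> cases w <;> first
          | exact absurd rfl hvw
          | simp only [map_mul, map_zero, FreeAlgebra.lift_ι_apply, genMap, toep_src, toep_rng,
            cond_false, cond_true, mul_assoc, h_aa', h_bb', h_ab', h_ba', mul_zero, zero_mul,
            mul_one]
    | src_edge e => cases e <;> simp only [map_mul, map_zero, FreeAlgebra.lift_ι_apply, genMap, toep_src, toep_rng,
            cond_false, cond_true, mul_assoc, h_aa', h_bb', h_ab', h_ba', mul_zero, zero_mul,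
            mul_one]
    | edge_rng e => cases e <;> simp only [map_mul, map_zero, FreeAlgebra.lift_ι_apply, genMap, toep_src, toep_rng,
            cond_false, cond_true, mul_assoc, h_aa', h_bb', h_ab', h_ba', mul_zero, zero_mul,
            mul_one]
    | rng_ghost e => cases e <;> simp only [map_mul, map_zero, FreeAlgebra.lift_ι_apply, genMap, toep_src, toep_rng,
            cond_false, cond_true, mul_assoc, h_aa', h_bb', h_ab', h_ba', mul_zero, zero_mul,
            mul_one]
    | ghost_src e => cases e <;> simp only [map_mul, map_zero, FreeAlgebra.lift_ι_apply, genMap, toep_src, toep_rng,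
            cond_false, cond_true, mul_assoc, h_aa', h_bb', h_ab', h_ba', mul_zero, zero_mul,
            mul_one]
    | ghost_edge_self e => cases e <;> simp only [map_mul, map_zero, FreeAlgebra.lift_ι_apply, genMap, toep_src, toep_rng,
            cond_false, cond_true, mul_assoc, h_aa', h_bb', h_ab', h_ba', mul_zero, zero_mul,
            mul_one]
    | @ghost_edge_ne e f hef =>
        cases e <;> cases f <;> first
          | exact absurd rfl hef
          | simp only [map_mul, map_zero, FreeAlgebra.lift_ι_apply, genMap, toep_src, toep_rng,
            cond_false, cond_true, mul_assoc, h_aa', h_bb', h_ab', h_ba', mul_zero, zero_mul,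
            mul_one]
    | cuntz_krieger v h hne =>
        cases v with
        | true =>
            obtain ⟨e, he⟩ := hne
            exact absurd he Bool.false_ne_true
        | false =>
            haveI : DecidableEq toeplitzGraph.E := instDecidableEqBool
            have hfin : h.toFinset = ({false, true} : Finset toeplitzGraph.E) := by
              apply Finset.ext
              intro e
              simp only [Set.Finite.mem_toFinset, Set.mem_setOf_eq, Finset.mem_insert,
                Finset.mem_singleton]
              cases e
              · exact ⟨fun _ => Finset.mem_insert_self _ _, fun _ => rfl⟩
              · exact ⟨fun _ => Finset.mem_insert_of_mem (Finset.mem_singleton_self _), fun _ => rfl⟩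
            have hs : ∀ F : toeplitzGraph.E → L2 R,
                ∑ x ∈ ({false, true} : Finset toeplitzGraph.E), F x = F false + F true :=
              fun F => Finset.sum_pair (fun hq => Bool.noConfusion hq)
            rw [hfin, map_sum, hs]
            simp only [map_mul, map_zero, FreeAlgebra.lift_ι_apply, genMap, toep_src, toep_rng,
              cond_false, cond_true, mul_assoc, h_aa', h_bb', h_ab', h_ba', mul_zero, zero_mul,
              mul_one]
            calc La R * Lastar R
                = La R * ((La R * Lastar R + Lb R * Lbstar R) * Lastar R) := by
                  rw [h_ck, one_mul]
              _ = La R * (La R * (Lastar R * Lastar R)) +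
                    La R * (Lb R * (Lbstar R * Lastar R)) := by
                  rw [add_mul, mul_add, mul_assoc, mul_assoc]⟩

lemma Phi_mk_gen (g : LGen toeplitzGraph) :
    Phi R (RingQuot.mkAlgHom R (LeavittRel toeplitzGraph R) (FreeAlgebra.ι R g)) =
      genMap R g := by
  rw [Phi, RingQuot.liftAlgHom_mkAlgHom_apply, FreeAlgebra.lift_ι_apply]

lemma Phi_av (c : Bool) :
    Phi R (av toeplitzGraph R c) = cond c (Lb R * Lbstar R) (La R * Lastar R) := by
  unfold av; rw [Phi_mk_gen]; rfl

lemma Phi_ae (c : Bool) :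
    Phi R (ae toeplitzGraph R c) =
      cond c (La R * (Lb R * Lbstar R)) (La R * (La R * Lastar R)) := by
  unfold ae; rw [Phi_mk_gen]; rfl

lemma Phi_ag (c : Bool) :
    Phi R (ag toeplitzGraph R c) =
      cond c (Lb R * (Lbstar R * Lastar R)) (La R * (Lastar R * Lastar R)) := by
  unfold ag; rw [Phi_mk_gen]; rfl

lemma amb_star_algebraMap (r : R) :
    star (algebraMap R (LeavittAmbient toeplitzGraph R) r) =
      algebraMap R (LeavittAmbient toeplitzGraph R) r := by
  rw [LPGraph.star_def, AlgHom.commutes, MulOpposite.algebraMap_apply, MulOpposite.unop_op]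

lemma l2_star_algebraMap (r : R) :
    star (algebraMap R (L2 R) r) = algebraMap R (L2 R) r := by
  rw [L2.star_def, AlgHom.commutes, MulOpposite.algebraMap_apply, MulOpposite.unop_op]

lemma amb_star_gen (g : LGen toeplitzGraph) :
    star (RingQuot.mkAlgHom R (LeavittRel toeplitzGraph R) (FreeAlgebra.ι R g)) =
      RingQuot.mkAlgHom R (LeavittRel toeplitzGraph R)
        (FreeAlgebra.ι R (starGen toeplitzGraph g)) := by
  rw [LPGraph.star_def, LPGraph.starMapAux_gen, MulOpposite.unop_op]

lemma Phi_star (x : LeavittAmbient toeplitzGraph R) :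
    Phi R (star x) = star (Phi R x) := by
  obtain ⟨y, rfl⟩ := RingQuot.mkAlgHom_surjective R (LeavittRel toeplitzGraph R) x
  induction y using FreeAlgebra.induction with
  | grade0 r =>
      rw [AlgHom.commutes, amb_star_algebraMap, AlgHom.commutes, l2_star_algebraMap]
  | grade1 g =>
      rw [amb_star_gen, Phi_mk_gen, Phi_mk_gen]
      cases g with
      | vert v =>
          cases v <;>
            simp only [starGen, genMap, toeplitzGraph, cond_false, cond_true, star_mul, L2.star_La,
              L2.star_Lb, L2.star_Lastar, L2.star_Lbstar, mul_assoc]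
      | edge e =>
          cases e <;>
            simp only [starGen, genMap, toeplitzGraph, cond_false, cond_true, star_mul, L2.star_La,
              L2.star_Lb, L2.star_Lastar, L2.star_Lbstar, mul_assoc]
      | ghost e =>
          cases e <;>
            simp only [starGen, genMap, toeplitzGraph, cond_false, cond_true, star_mul, L2.star_La,
              L2.star_Lb, L2.star_Lastar, L2.star_Lbstar, mul_assoc]
  | mul x y ihx ihy =>
      rw [map_mul, star_mul, map_mul, ihx, ihy, map_mul, star_mul]
  | add x y ihx ihy =>
      rw [map_add, star_add, map_add, ihx, ihy, map_add, star_add]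


/-! ### Relations in the ambient Leavitt algebra of the Toeplitz graph -/

noncomputable def au : LeavittAmbient toeplitzGraph R := av toeplitzGraph R false
noncomputable def avv : LeavittAmbient toeplitzGraph R := av toeplitzGraph R true
noncomputable def e0 : LeavittAmbient toeplitzGraph R := ae toeplitzGraph R false
noncomputable def e1 : LeavittAmbient toeplitzGraph R := ae toeplitzGraph R true
noncomputable def g0 : LeavittAmbient toeplitzGraph R := ag toeplitzGraph R false
noncomputable def g1 : LeavittAmbient toeplitzGraph R := ag toeplitzGraph R true

lemma r_uu : au R * au R = au R := by
  simp only [au, avv, e0, e1, g0, g1, av, ae, ag, ← map_mul]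
  exact RingQuot.mkAlgHom_rel R (LeavittRel.vert_self (G := toeplitzGraph) (R := R) false)

lemma r_vv : avv R * avv R = avv R := by
  simp only [au, avv, e0, e1, g0, g1, av, ae, ag, ← map_mul]
  exact RingQuot.mkAlgHom_rel R (LeavittRel.vert_self (G := toeplitzGraph) (R := R) true)

lemma r_uv : au R * avv R = 0 := by
  simp only [au, avv, e0, e1, g0, g1, av, ae, ag, ← map_mul]
  rw [RingQuot.mkAlgHom_rel R (LeavittRel.vert_ne (G := toeplitzGraph) (R := R) (Bool.false_ne_true)), map_zero]

lemma r_vu : avv R * au R = 0 := by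
  simp only [au, avv, e0, e1, g0, g1, av, ae, ag, ← map_mul]
  rw [RingQuot.mkAlgHom_rel R (LeavittRel.vert_ne (G := toeplitzGraph) (R := R) (Bool.false_ne_true).symm), map_zero]

lemma r_ue0 : au R * e0 R = e0 R := by
  simp only [au, avv, e0, e1, g0, g1, av, ae, ag, ← map_mul]
  exact RingQuot.mkAlgHom_rel R (LeavittRel.src_edge (G := toeplitzGraph) (R := R) false)

lemma r_ue1 : au R * e1 R = e1 R := by
  simp only [au, avv, e0, e1, g0, g1, av, ae, ag, ← map_mul]
  exact RingQuot.mkAlgHom_rel R (LeavittRel.src_edge (G := toeplitzGraph) (R := R) true)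

lemma r_e0u : e0 R * au R = e0 R := by
  simp only [au, avv, e0, e1, g0, g1, av, ae, ag, ← map_mul]
  exact RingQuot.mkAlgHom_rel R (LeavittRel.edge_rng (G := toeplitzGraph) (R := R) false)

lemma r_e1v : e1 R * avv R = e1 R := by
  simp only [au, avv, e0, e1, g0, g1, av, ae, ag, ← map_mul]
  exact RingQuot.mkAlgHom_rel R (LeavittRel.edge_rng (G := toeplitzGraph) (R := R) true)

lemma r_ug0 : au R * g0 R = g0 R := by
  simp only [au, avv, e0, e1, g0, g1, av, ae, ag, ← map_mul]
  exact RingQuot.mkAlgHom_rel R (LeavittRel.rng_ghost (G := toeplitzGraph) (R := R) false)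

lemma r_vg1 : avv R * g1 R = g1 R := by
  simp only [au, avv, e0, e1, g0, g1, av, ae, ag, ← map_mul]
  exact RingQuot.mkAlgHom_rel R (LeavittRel.rng_ghost (G := toeplitzGraph) (R := R) true)

lemma r_g0u : g0 R * au R = g0 R := by
  simp only [au, avv, e0, e1, g0, g1, av, ae, ag, ← map_mul]
  exact RingQuot.mkAlgHom_rel R (LeavittRel.ghost_src (G := toeplitzGraph) (R := R) false)

lemma r_g1u : g1 R * au R = g1 R := by
  simp only [au, avv, e0, e1, g0, g1, av, ae, ag, ← map_mul]
  exact RingQuot.mkAlgHom_rel R (LeavittRel.ghost_src (G := toeplitzGraph) (R := R) true)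

lemma r_g0e0 : g0 R * e0 R = au R := by
  simp only [au, avv, e0, e1, g0, g1, av, ae, ag, ← map_mul]
  exact RingQuot.mkAlgHom_rel R (LeavittRel.ghost_edge_self (G := toeplitzGraph) (R := R) false)

lemma r_g1e1 : g1 R * e1 R = avv R := by
  simp only [au, avv, e0, e1, g0, g1, av, ae, ag, ← map_mul]
  exact RingQuot.mkAlgHom_rel R (LeavittRel.ghost_edge_self (G := toeplitzGraph) (R := R) true)

lemma r_g0e1 : g0 R * e1 R = 0 := by
  simp only [au, avv, e0, e1, g0, g1, av, ae, ag, ← map_mul]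
  rw [RingQuot.mkAlgHom_rel R (LeavittRel.ghost_edge_ne (G := toeplitzGraph) (R := R) (Bool.false_ne_true)), map_zero]

lemma r_g1e0 : g1 R * e0 R = 0 := by
  simp only [au, avv, e0, e1, g0, g1, av, ae, ag, ← map_mul]
  rw [RingQuot.mkAlgHom_rel R (LeavittRel.ghost_edge_ne (G := toeplitzGraph) (R := R) (Bool.false_ne_true).symm), map_zero]

lemma r_ck : au R = e0 R * g0 R + e1 R * g1 R := by
  haveI : DecidableEq toeplitzGraph.E := instDecidableEqBool
  haveI : Finite toeplitzGraph.E := inferInstanceAs (Finite Bool)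
  have h : {e : toeplitzGraph.E | toeplitzGraph.src e = false}.Finite :=
    Set.toFinite _
  have hne : {e : toeplitzGraph.E | toeplitzGraph.src e = false}.Nonempty :=
    ⟨false, rfl⟩
  have hfin : h.toFinset = ({false, true} : Finset toeplitzGraph.E) := by
    apply Finset.ext
    intro e
    simp only [Set.Finite.mem_toFinset, Set.mem_setOf_eq, Finset.mem_insert,
      Finset.mem_singleton]
    cases e
    · exact ⟨fun _ => Finset.mem_insert_self _ _, fun _ => rfl⟩
    · exact ⟨fun _ => Finset.mem_insert_of_mem (Finset.mem_singleton_self _), fun _ => rfl⟩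
  have hs : ∀ F : toeplitzGraph.E → LeavittAmbient toeplitzGraph R,
      ∑ x ∈ ({false, true} : Finset toeplitzGraph.E), F x = F false + F true :=
    fun F => Finset.sum_pair (fun hq => Bool.noConfusion hq)
  have hrel := RingQuot.mkAlgHom_rel R (LeavittRel.cuntz_krieger (G := toeplitzGraph) (R := R) false h hne)
  rw [map_sum] at hrel
  simp only [map_mul] at hrel
  rw [hfin, hs] at hrel
  simp only [au, avv, e0, e1, g0, g1, av, ae, ag]
  exact hrel

/- derived relations -/
lemma r_ve0 : avv R * e0 R = 0 := by rw [← r_ue0, ← mul_assoc, r_vu, zero_mul]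
lemma r_ve1 : avv R * e1 R = 0 := by rw [← r_ue1, ← mul_assoc, r_vu, zero_mul]
lemma r_e0v : e0 R * avv R = 0 := by rw [← r_e0u, mul_assoc, r_uv, mul_zero]
lemma r_e1u : e1 R * au R = 0 := by rw [← r_e1v, mul_assoc, r_vu, mul_zero]
lemma r_ug1 : au R * g1 R = 0 := by rw [← r_vg1, ← mul_assoc, r_uv, zero_mul]
lemma r_vg0 : avv R * g0 R = 0 := by rw [← r_ug0, ← mul_assoc, r_vu, zero_mul]
lemma r_g0v : g0 R * avv R = 0 := by rw [← r_g0u, mul_assoc, r_uv, mul_zero]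
lemma r_g1v : g1 R * avv R = 0 := by rw [← r_g1u, mul_assoc, r_uv, mul_zero]
lemma r_e0g1 : e0 R * g1 R = 0 := by rw [← r_vg1, ← mul_assoc, r_e0v, zero_mul]
lemma r_e1g0 : e1 R * g0 R = 0 := by rw [← r_ug0, ← mul_assoc, r_e1u, zero_mul]

/-! ### The local unit and the generating partial isometry -/

noncomputable def tw : LeavittAmbient toeplitzGraph R := au R + avv R
noncomputable def tt : LeavittAmbient toeplitzGraph R := e0 R + e1 R
noncomputable def tg : LeavittAmbient toeplitzGraph R := g0 R + g1 R

lemma r_ww : tw R * tw R = tw R := by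
  rw [tw, add_mul, mul_add, mul_add, r_uu, r_uv, r_vu, r_vv, add_zero, zero_add]

lemma r_wt : tw R * tt R = tt R := by
  rw [tw, tt, add_mul, mul_add, mul_add, r_ue0, r_ue1, r_ve0, r_ve1, add_zero, add_zero]

lemma r_tww : tt R * tw R = tt R := by
  rw [tw, tt, add_mul, mul_add, mul_add, r_e0u, r_e0v, r_e1u, r_e1v, add_zero, zero_add]

lemma r_wtg : tw R * tg R = tg R := by
  rw [tw, tg, add_mul, mul_add, mul_add, r_ug0, r_ug1, r_vg0, r_vg1, add_zero, zero_add]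

lemma r_tgw : tg R * tw R = tg R := by
  rw [tw, tg, add_mul, mul_add, mul_add, r_g0u, r_g0v, r_g1u, r_g1v, add_zero, add_zero]

lemma r_tgt : tg R * tt R = tw R := by
  rw [tg, tt, tw, add_mul, mul_add, mul_add, r_g0e0, r_g0e1, r_g1e0, r_g1e1, add_zero,
    zero_add]

lemma r_ttg : tt R * tg R = au R := by
  rw [tt, tg, add_mul, mul_add, mul_add, r_e0g1, r_e1g0, add_zero, zero_add, ← r_ck]

lemma comm_w_t : Commute (tw R) (tt R) := by
  show tw R * tt R = tt R * tw R
  rw [r_wt, r_tww]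

lemma comm_w_tg : Commute (tw R) (tg R) := by
  show tw R * tg R = tg R * tw R
  rw [r_wtg, r_tgw]

lemma wtt : ∀ n p : ℕ, tw R * (tg R ^ n * tt R ^ p) =
    if n ≤ p then tt R ^ (p - n) * tw R else tg R ^ (n - p) * tw R := by
  intro n
  induction n with
  | zero =>
      intro p
      rw [if_pos (Nat.zero_le p), pow_zero, one_mul, Nat.sub_zero]
      exact ((comm_w_t R).pow_right p)
  | succ n ih =>
      intro p
      cases p with
      | zero =>
          rw [if_neg (by omega), pow_zero, mul_one, Nat.sub_zero]
          exact ((comm_w_tg R).pow_right (n + 1))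
      | succ p =>
          have step : tg R ^ (n + 1) * tt R ^ (p + 1) = tw R * (tg R ^ n * tt R ^ p) := by
            rw [pow_succ, pow_succ']
            calc tg R ^ n * tg R * (tt R * tt R ^ p)
                = tg R ^ n * ((tg R * tt R) * tt R ^ p) := by
                  simp only [mul_assoc]
              _ = tg R ^ n * (tw R * tt R ^ p) := by rw [r_tgt]
              _ = tw R * (tg R ^ n * tt R ^ p) := by
                  rw [← mul_assoc, ← ((comm_w_tg R).pow_right n).eq, mul_assoc]
          rw [step, ← mul_assoc, r_ww, ih p]
          simp only [Nat.succ_sub_succ, Nat.add_le_add_iff_right]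

/-! ### Monomials spanning the Leavitt path algebra -/

noncomputable def mono (p : ℕ × ℕ) : LeavittAmbient toeplitzGraph R :=
  tt R ^ p.1 * tw R * tg R ^ p.2

lemma mono_mul (m n p q : ℕ) : mono R (m, n) * mono R (p, q)
    = if n ≤ p then mono R (m + (p - n), q) else mono R (m, n - p + q) := by
  have key := wtt R n p
  by_cases h : n ≤ p
  · rw [if_pos h] at key ⊢
    show tt R ^ m * tw R * tg R ^ n * (tt R ^ p * tw R * tg R ^ q)
      = tt R ^ (m + (p - n)) * tw R * tg R ^ q
    calc tt R ^ m * tw R * tg R ^ n * (tt R ^ p * tw R * tg R ^ q)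
        = tt R ^ m * ((tw R * (tg R ^ n * tt R ^ p)) * (tw R * tg R ^ q)) := by
          simp only [mul_assoc]
      _ = tt R ^ m * ((tt R ^ (p - n) * tw R) * (tw R * tg R ^ q)) := by rw [key]
      _ = tt R ^ m * (tt R ^ (p - n) * ((tw R * tw R) * tg R ^ q)) := by
          simp only [mul_assoc]
      _ = tt R ^ (m + (p - n)) * tw R * tg R ^ q := by
          rw [r_ww, pow_add]; simp only [mul_assoc]
  · rw [if_neg h] at key ⊢
    show tt R ^ m * tw R * tg R ^ n * (tt R ^ p * tw R * tg R ^ q)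
      = tt R ^ m * tw R * tg R ^ (n - p + q)
    calc tt R ^ m * tw R * tg R ^ n * (tt R ^ p * tw R * tg R ^ q)
        = tt R ^ m * ((tw R * (tg R ^ n * tt R ^ p)) * (tw R * tg R ^ q)) := by
          simp only [mul_assoc]
      _ = tt R ^ m * ((tg R ^ (n - p) * tw R) * (tw R * tg R ^ q)) := by rw [key]
      _ = tt R ^ m * (tg R ^ (n - p) * ((tw R * tw R) * tg R ^ q)) := by
          simp only [mul_assoc]
      _ = tt R ^ m * ((tg R ^ (n - p) * tw R) * tg R ^ q) := by rw [r_ww, mul_assoc]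
      _ = tt R ^ m * ((tw R * tg R ^ (n - p)) * tg R ^ q) := by
          rw [((comm_w_tg R).pow_right (n - p)).eq]
      _ = tt R ^ m * tw R * tg R ^ (n - p + q) := by
          rw [pow_add]; simp only [mul_assoc]

noncomputable def sp : Submodule R (LeavittAmbient toeplitzGraph R) :=
  Submodule.span R (Set.range (mono R))

lemma mono_mem (p : ℕ × ℕ) : mono R p ∈ sp R := Submodule.subset_span ⟨p, rfl⟩

lemma mono_mul_mem (p q : ℕ × ℕ) : mono R p * mono R q ∈ Set.range (mono R) := by
  obtain ⟨m, n⟩ := p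
  obtain ⟨a, b⟩ := q
  rw [mono_mul]
  split <;> exact ⟨_, rfl⟩

lemma sp_mul_mem {x y : LeavittAmbient toeplitzGraph R} (hx : x ∈ sp R) (hy : y ∈ sp R) :
    x * y ∈ sp R := by
  have hle : sp R * sp R ≤ sp R := by
    rw [sp, Submodule.span_mul_span]
    apply Submodule.span_le.mpr
    rintro z ⟨x', ⟨p, rfl⟩, y', ⟨q, rfl⟩, rfl⟩
    exact Submodule.subset_span (mono_mul_mem R p q)
  exact hle (Submodule.mul_mem_mul hx hy)

lemma mono00 : mono R (0, 0) = tw R := by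
  show tt R ^ 0 * tw R * tg R ^ 0 = tw R
  rw [pow_zero, pow_zero, one_mul, mul_one]

lemma mono11 : mono R (1, 1) = au R := by
  show tt R ^ 1 * tw R * tg R ^ 1 = au R
  rw [pow_one, pow_one, r_tww, r_ttg]

lemma mono10 : mono R (1, 0) = tt R := by
  show tt R ^ 1 * tw R * tg R ^ 0 = tt R
  rw [pow_one, pow_zero, mul_one, r_tww]

lemma mono01 : mono R (0, 1) = tg R := by
  show tt R ^ 0 * tw R * tg R ^ 1 = tg R
  rw [pow_one, pow_zero, one_mul, r_wtg]

lemma mono21 : mono R (2, 1) = e0 R := by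
  show tt R ^ 2 * tw R * tg R ^ 1 = e0 R
  rw [pow_one, sq, mul_assoc, mul_assoc, r_wtg, r_ttg]
  rw [tt, add_mul, r_e0u, r_e1u, add_zero]

lemma mono12 : mono R (1, 2) = g0 R := by
  show tt R ^ 1 * tw R * tg R ^ 2 = g0 R
  rw [pow_one, sq, r_tww, ← mul_assoc, r_ttg]
  rw [tg, mul_add, r_ug0, r_ug1, add_zero]

lemma mem_sp_of_mem_adjoin {x : LeavittAmbient toeplitzGraph R}
    (hx : x ∈ NonUnitalAlgebra.adjoin R (genSet toeplitzGraph R)) : x ∈ sp R := by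
  induction hx using NonUnitalAlgebra.adjoin_induction with
  | mem x hx =>
      rcases hx with (⟨c, rfl⟩ | ⟨c, rfl⟩) | ⟨c, rfl⟩
      · cases c
        · rw [show av toeplitzGraph R false = mono R (1, 1) from (mono11 R).symm]
          exact mono_mem R (1, 1)
        · have h2 : av toeplitzGraph R true = mono R (0, 0) - mono R (1, 1) := by
            rw [mono00, mono11, tw, add_sub_cancel_left]; rfl
          rw [h2]
          exact sub_mem (mono_mem R _) (mono_mem R _)
      · cases c
        · rw [show ae toeplitzGraph R false = mono R (2, 1) from (mono21 R).symm]
          exact mono_mem R (2, 1)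
        · have h2 : ae toeplitzGraph R true = mono R (1, 0) - mono R (2, 1) := by
            rw [mono10, mono21, tt, add_sub_cancel_left]; rfl
          rw [h2]
          exact sub_mem (mono_mem R _) (mono_mem R _)
      · cases c
        · rw [show ag toeplitzGraph R false = mono R (1, 2) from (mono12 R).symm]
          exact mono_mem R (1, 2)
        · have h2 : ag toeplitzGraph R true = mono R (0, 1) - mono R (1, 2) := by
            rw [mono01, mono12, tg, add_sub_cancel_left]; rfl
          rw [h2]
          exact sub_mem (mono_mem R _) (mono_mem R _)
  | add x y hx hy ihx ihy => exact add_mem ihx ihy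
  | zero => exact zero_mem _
  | mul x y hx hy ihx ihy => exact sp_mul_mem R ihx ihy
  | smul r x hx ih => exact SMulMemClass.smul_mem r ih

/-! ### Images of the monomials under `Phi` -/

lemma Phi_tt : Phi R (tt R) = La R := by
  rw [tt, map_add, e0, e1, Phi_ae, Phi_ae, cond_false, cond_true, ← mul_add, h_ck, mul_one]

lemma Phi_tg : Phi R (tg R) = Lastar R := by
  rw [tg, map_add, g0, g1, Phi_ag, Phi_ag, cond_false, cond_true, ← mul_assoc, ← mul_assoc,
    ← add_mul, h_ck, one_mul]

lemma Phi_tw : Phi R (tw R) = 1 := by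
  rw [tw, map_add, au, avv, Phi_av, Phi_av, cond_false, cond_true, h_ck]

lemma Phi_mono (p : ℕ × ℕ) : Phi R (mono R p) = La R ^ p.1 * Lastar R ^ p.2 := by
  rw [mono, map_mul, map_mul, map_pow, map_pow, Phi_tt, Phi_tg, Phi_tw, mul_one]


/-! ### The `*`-homomorphism on the Leavitt path algebra -/

noncomputable def phi : LPA toeplitzGraph R →⋆ₙₐ[R] L2 R where
  toFun x := Phi R (x : LeavittAmbient toeplitzGraph R)
  map_smul' r x := by
    show Phi R (r • (x : LeavittAmbient toeplitzGraph R)) = r • Phi R _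
    rw [map_smul]
  map_zero' := by
    show Phi R 0 = 0
    rw [map_zero]
  map_add' x y := by
    show Phi R ((x : LeavittAmbient toeplitzGraph R) + (y : LeavittAmbient toeplitzGraph R))
      = _
    rw [map_add]
  map_mul' x y := by
    show Phi R ((x : LeavittAmbient toeplitzGraph R) * (y : LeavittAmbient toeplitzGraph R))
      = _
    rw [map_mul]
  map_star' x := by
    show Phi R (star (x : LeavittAmbient toeplitzGraph R)) = star (Phi R _)
    rw [Phi_star]

lemma phi_apply (x : LPA toeplitzGraph R) :
    phi R x = Phi R (x : LeavittAmbient toeplitzGraph R) := rfl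

end ToepAux


open ToepAux

/-- The assignment `u ↦ aa*`, `v ↦ bb*`, `e ↦ aaa*`, `f ↦ abb*` extends to a unital
injective `*`-algebra homomorphism `L_R(𝒯) → L_{2,R}`. -/
theorem toeplitz_embeds_into_l2
    (R : Type) [CommRing R] :
    ∃ φ : LPA toeplitzGraph R →⋆ₙₐ[R] L2 R,
      φ (lv toeplitzGraph R false) = La R * star (La R) ∧
      φ (lv toeplitzGraph R true) = Lb R * star (Lb R) ∧
      φ (le toeplitzGraph R false) = La R * La R * star (La R) ∧
      φ (le toeplitzGraph R true) = La R * Lb R * star (Lb R) ∧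
      φ (lv toeplitzGraph R false + lv toeplitzGraph R true) = 1 ∧
      Function.Injective φ := by
  refine ⟨phi R, ?_, ?_, ?_, ?_, ?_, ?_⟩
  · rw [L2.star_La]
    show Phi R (av toeplitzGraph R false) = _
    rw [Phi_av, cond_false]
  · rw [L2.star_Lb]
    show Phi R (av toeplitzGraph R true) = _
    rw [Phi_av, cond_true]
  · rw [L2.star_La, mul_assoc]
    show Phi R (ae toeplitzGraph R false) = _
    rw [Phi_ae, cond_false]
  · rw [L2.star_Lb, mul_assoc]
    show Phi R (ae toeplitzGraph R true) = _
    rw [Phi_ae, cond_true]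
  · show Phi R (av toeplitzGraph R false + av toeplitzGraph R true) = 1
    rw [map_add, Phi_av, Phi_av, cond_false, cond_true]
    exact h_ck R
  · intro x y hxy
    have hx : (x : LeavittAmbient toeplitzGraph R) ∈
        NonUnitalAlgebra.adjoin R (genSet toeplitzGraph R) := x.2
    have hy : (y : LeavittAmbient toeplitzGraph R) ∈
        NonUnitalAlgebra.adjoin R (genSet toeplitzGraph R) := y.2
    have hsub : (x : LeavittAmbient toeplitzGraph R) - y ∈ sp R :=
      sub_mem (mem_sp_of_mem_adjoin R hx) (mem_sp_of_mem_adjoin R hy)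
    have hz : Phi R ((x : LeavittAmbient toeplitzGraph R) - y) = 0 := by
      rw [map_sub, sub_eq_zero]
      exact hxy
    obtain ⟨c, hc⟩ := Finsupp.mem_span_range_iff_exists_finsupp.mp hsub
    have hlc : Finsupp.linearCombination R
        (fun p : ℕ × ℕ => La R ^ p.1 * Lastar R ^ p.2) c = 0 := by
      rw [Finsupp.linearCombination_apply]
      calc c.sum (fun p r => r • (La R ^ p.1 * Lastar R ^ p.2))
          = Phi R (c.sum fun p r => r • mono R p) := by
            rw [map_finsuppSum]
            exact (Finsupp.sum_congr fun p _ => by rw [map_smul, Phi_mono]).symm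
        _ = 0 := by rw [hc]; exact hz
    have hc0 : c = 0 := linearIndependent_iff.mp (indep R) c hlc
    have hxy0 : (x : LeavittAmbient toeplitzGraph R) - y = 0 := by
      rw [← hc, hc0, Finsupp.sum_zero_index]
    exact Subtype.ext (sub_eq_zero.mp hxy0)
end

section
/- Let R be a commutative ring with unit and let u = aaa* + aba*b* + bb*b* ∈ L_{2,R}. Then there is a unital R-algebra homomorphism from the Laurent polynomial ring R[z, z^{-1}] to L_{2,R} sending z to u and z^{-1} to u*, and this homomorphism is injective. -/
set_option synthInstance.maxHeartbeats 1000000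
set_option maxHeartbeats 1000000

open FreeAlgebra

variable (R : Type) [CommRing R]

open L2


namespace LeavittAux

open Finsupp L2

variable (R : Type) [CommRing R]

lemma double_inj : Function.Injective (fun n : ℕ => 2 * n) := fun x y h => by
  dsimp only at h; omega

lemma doubleS_inj : Function.Injective (fun n : ℕ => 2 * n + 1) := fun x y h => by
  dsimp only at h; omega

/-- `a` acts on `ℕ →₀ R` by `eₙ ↦ e₂ₙ`. -/
noncomputable def opA : Module.End R (ℕ →₀ R) := Finsupp.lmapDomain R R (fun n => 2 * n)

/-- `b` acts on `ℕ →₀ R` by `eₙ ↦ e₂ₙ₊₁`. -/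
noncomputable def opB : Module.End R (ℕ →₀ R) := Finsupp.lmapDomain R R (fun n => 2 * n + 1)

/-- `a*` acts on `ℕ →₀ R` by `e₂ₙ ↦ eₙ`, `e₂ₙ₊₁ ↦ 0`. -/
noncomputable def opA' : Module.End R (ℕ →₀ R) :=
  Finsupp.lcomapDomain (fun n => 2 * n) double_inj

/-- `b*` acts on `ℕ →₀ R` by `e₂ₙ₊₁ ↦ eₙ`, `e₂ₙ ↦ 0`. -/
noncomputable def opB' : Module.End R (ℕ →₀ R) :=
  Finsupp.lcomapDomain (fun n => 2 * n + 1) doubleS_inj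

lemma opA_single (n : ℕ) (r : R) : opA R (single n r) = single (2 * n) r :=
  mapDomain_single

lemma opB_single (n : ℕ) (r : R) : opB R (single n r) = single (2 * n + 1) r :=
  mapDomain_single

lemma opA'_single_even (n : ℕ) (r : R) : opA' R (single (2 * n) r) = single n r :=
  comapDomain_single (fun n => 2 * n) n r _

lemma opB'_single_odd (n : ℕ) (r : R) : opB' R (single (2 * n + 1) r) = single n r :=
  comapDomain_single (fun n => 2 * n + 1) n r _

lemma opA'_single_odd (n : ℕ) (r : R) : opA' R (single (2 * n + 1) r) = 0 := by
  ext m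
  rw [show opA' R (single (2 * n + 1) r) = comapDomain (fun n => 2 * n) (single (2 * n + 1) r)
    (double_inj.injOn) from rfl]
  rw [comapDomain_apply, single_apply, if_neg (by omega)]
  rfl

lemma opB'_single_even (n : ℕ) (r : R) : opB' R (single (2 * n) r) = 0 := by
  ext m
  rw [show opB' R (single (2 * n) r) = comapDomain (fun n => 2 * n + 1) (single (2 * n) r)
    (doubleS_inj.injOn) from rfl]
  rw [comapDomain_apply, single_apply, if_neg (by omega)]
  rfl

lemma rel_a : opA' R * opA R = 1 := by
  apply Finsupp.lhom_ext
  intro n r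
  rw [Module.End.mul_apply, opA_single, opA'_single_even, Module.End.one_apply]

lemma rel_b : opB' R * opB R = 1 := by
  apply Finsupp.lhom_ext
  intro n r
  rw [Module.End.mul_apply, opB_single, opB'_single_odd, Module.End.one_apply]

lemma rel_ck : opA R * opA' R + opB R * opB' R = 1 := by
  apply Finsupp.lhom_ext
  intro n r
  rcases Nat.even_or_odd n with ⟨m, rfl⟩ | ⟨m, rfl⟩
  · rw [show m + m = 2 * m by ring, LinearMap.add_apply, Module.End.mul_apply,
      Module.End.mul_apply, opA'_single_even, opB'_single_even, opA_single, map_zero,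
      add_zero, Module.End.one_apply]
  · rw [LinearMap.add_apply, Module.End.mul_apply, Module.End.mul_apply,
      opA'_single_odd, opB'_single_odd, opB_single, map_zero, zero_add,
      Module.End.one_apply]

/-- The generators of the representation. -/
noncomputable def genOp : L2Gen → Module.End R (ℕ →₀ R)
  | .a => opA R
  | .astar => opA' R
  | .b => opB R
  | .bstar => opB' R

/-- The representation `π : L₂(R) → End(ℕ →₀ R)`. -/
noncomputable def rep : L2 R →ₐ[R] Module.End R (ℕ →₀ R) :=
  RingQuot.liftAlgHom R
    ⟨FreeAlgebra.lift R (genOp R), by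
      intro x y h
      induction h with
      | a_adj =>
          rw [map_one, map_mul, FreeAlgebra.lift_ι_apply, FreeAlgebra.lift_ι_apply]
          exact rel_a R
      | b_adj =>
          rw [map_one, map_mul, FreeAlgebra.lift_ι_apply, FreeAlgebra.lift_ι_apply]
          exact rel_b R
      | ck =>
          rw [map_one, map_add, map_mul, map_mul, FreeAlgebra.lift_ι_apply,
            FreeAlgebra.lift_ι_apply, FreeAlgebra.lift_ι_apply, FreeAlgebra.lift_ι_apply]
          exact rel_ck R⟩

lemma rep_La : rep R (La R) = opA R := by
  rw [La, rep, RingQuot.liftAlgHom_mkAlgHom_apply, FreeAlgebra.lift_ι_apply]; rfl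

lemma rep_Lb : rep R (Lb R) = opB R := by
  rw [Lb, rep, RingQuot.liftAlgHom_mkAlgHom_apply, FreeAlgebra.lift_ι_apply]; rfl

lemma rep_Lastar : rep R (star (La R)) = opA' R := by
  rw [star_La, Lastar, rep, RingQuot.liftAlgHom_mkAlgHom_apply, FreeAlgebra.lift_ι_apply]; rfl

lemma rep_Lbstar : rep R (star (Lb R)) = opB' R := by
  rw [star_Lb, Lbstar, rep, RingQuot.liftAlgHom_mkAlgHom_apply, FreeAlgebra.lift_ι_apply]; rfl

/-- The element `u = aaa* + aba*b* + bb*b*`. -/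
noncomputable def uu : L2 R :=
  La R * La R * star (La R) + La R * Lb R * star (La R) * star (Lb R) +
    Lb R * star (Lb R) * star (Lb R)

lemma star_uu : star (uu R) =
    La R * star (La R) * star (La R) + Lb R * La R * star (Lb R) * star (La R) +
      Lb R * Lb R * star (Lb R) := by
  simp only [uu, star_add, star_mul, star_star, mul_assoc]

lemma astar_b : star (La R) * Lb R = 0 := by
  have key : star (La R) * Lb R = star (La R) * Lb R + star (La R) * Lb R := by
    calc star (La R) * Lb R
        = star (La R) * ((La R * star (La R) + Lb R * star (Lb R)) * Lb R) := by
          rw [ck_rel, one_mul]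
      _ = (star (La R) * La R) * (star (La R) * Lb R) +
            (star (La R) * Lb R) * (star (Lb R) * Lb R) := by noncomm_ring
      _ = star (La R) * Lb R + star (La R) * Lb R := by
          rw [astar_a, bstar_b, one_mul, mul_one]
  nth_rewrite 1 [← add_zero (star (La R) * Lb R)] at key
  exact (add_left_cancel key).symm

lemma bstar_a : star (Lb R) * La R = 0 := by
  have key : star (Lb R) * La R = star (Lb R) * La R + star (Lb R) * La R := by
    calc star (Lb R) * La R
        = star (Lb R) * ((La R * star (La R) + Lb R * star (Lb R)) * La R) := by
          rw [ck_rel, one_mul]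
      _ = (star (Lb R) * La R) * (star (La R) * La R) +
            (star (Lb R) * Lb R) * (star (Lb R) * La R) := by noncomm_ring
      _ = star (Lb R) * La R + star (Lb R) * La R := by
          rw [astar_a, bstar_b, one_mul, mul_one]
  nth_rewrite 1 [← add_zero (star (Lb R) * La R)] at key
  exact (add_left_cancel key).symm

lemma W1 (x : L2 R) : star (La R) * (La R * x) = x := by
  rw [← mul_assoc, astar_a, one_mul]

lemma W2 (x : L2 R) : star (Lb R) * (Lb R * x) = x := by
  rw [← mul_assoc, bstar_b, one_mul]

lemma W3 (x : L2 R) : star (La R) * (Lb R * x) = 0 := by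
  rw [← mul_assoc, astar_b, zero_mul]

lemma W4 (x : L2 R) : star (Lb R) * (La R * x) = 0 := by
  rw [← mul_assoc, bstar_a, zero_mul]

lemma uu_mul_star : uu R * star (uu R) = 1 := by
  rw [star_uu, uu]
  simp only [mul_add, add_mul, mul_assoc, W1 R, W2 R, W3 R, W4 R, astar_a, astar_b, bstar_a,
    bstar_b, mul_zero, zero_mul, mul_one, one_mul, add_zero, zero_add]
  have inner : La R * (star (La R) * star (La R)) + Lb R * (star (Lb R) * star (La R)) =
      star (La R) := by
    calc La R * (star (La R) * star (La R)) + Lb R * (star (Lb R) * star (La R))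
        = (La R * star (La R) + Lb R * star (Lb R)) * star (La R) := by noncomm_ring
      _ = star (La R) := by rw [ck_rel, one_mul]
  rw [← mul_add, inner, ck_rel]

lemma star_mul_uu : star (uu R) * uu R = 1 := by
  rw [star_uu, uu]
  simp only [mul_add, add_mul, mul_assoc, W1 R, W2 R, W3 R, W4 R, astar_a, astar_b, bstar_a,
    bstar_b, mul_zero, zero_mul, mul_one, one_mul, add_zero, zero_add]
  have inner : La R * (star (La R) * star (Lb R)) + Lb R * (star (Lb R) * star (Lb R)) =
      star (Lb R) := by
    calc La R * (star (La R) * star (Lb R)) + Lb R * (star (Lb R) * star (Lb R))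
        = (La R * star (La R) + Lb R * star (Lb R)) * star (Lb R) := by noncomm_ring
      _ = star (Lb R) := by rw [ck_rel, one_mul]
  rw [add_assoc, ← mul_add, inner, ck_rel]

/-- `u` as a unit of `L₂`. -/
noncomputable def U : (L2 R)ˣ :=
  ⟨uu R, star (uu R), uu_mul_star R, star_mul_uu R⟩

lemma opA_eq (n k : ℕ) (h : k = 2 * n) (r : R) : opA R (single n r) = single k r := by
  rw [h, opA_single]

lemma opB_eq (n k : ℕ) (h : k = 2 * n + 1) (r : R) : opB R (single n r) = single k r := by
  rw [h, opB_single]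

lemma opA'_eq (n k : ℕ) (h : n = 2 * k) (r : R) : opA' R (single n r) = single k r := by
  rw [h, opA'_single_even]

lemma opB'_eq (n k : ℕ) (h : n = 2 * k + 1) (r : R) : opB' R (single n r) = single k r := by
  rw [h, opB'_single_odd]

lemma opA'_eq0 (n k : ℕ) (h : n = 2 * k + 1) (r : R) : opA' R (single n r) = 0 := by
  rw [h, opA'_single_odd]

lemma opB'_eq0 (n k : ℕ) (h : n = 2 * k) (r : R) : opB' R (single n r) = 0 := by
  rw [h, opB'_single_even]

lemma rep_uu : rep R (uu R) =
    opA R * opA R * opA' R + opA R * opB R * opA' R * opB' R + opB R * opB' R * opB' R := by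
  simp only [uu, map_add, map_mul, rep_La, rep_Lb, rep_Lastar, rep_Lbstar]

lemma rep_star_uu : rep R (star (uu R)) =
    opA R * opA' R * opA' R + opB R * opA R * opB' R * opA' R + opB R * opB R * opB' R := by
  rw [star_uu]
  simp only [map_add, map_mul, rep_La, rep_Lb, rep_Lastar, rep_Lbstar]

lemma rep_uu_even (m : ℕ) :
    rep R (uu R) (single (2 * m) (1 : R)) = single (4 * m) 1 := by
  rw [rep_uu]
  simp only [LinearMap.add_apply, Module.End.mul_apply]
  rw [opB'_eq0 R (2 * m) m rfl, opA'_eq R (2 * m) m rfl,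
    opA_eq R m (2 * m) rfl, opA_eq R (2 * m) (4 * m) (by omega)]
  simp only [map_zero, add_zero]

lemma rep_uu_one : rep R (uu R) (single 1 (1 : R)) = single 2 1 := by
  rw [rep_uu]
  simp only [LinearMap.add_apply, Module.End.mul_apply]
  rw [opB'_eq R 1 0 rfl, opA'_eq0 R 1 0 rfl, opA'_eq R 0 0 rfl, opB'_eq0 R 0 0 rfl,
    opB_eq R 0 1 rfl, opA_eq R 1 2 rfl]
  simp only [map_zero, add_zero, zero_add]

lemma rep_star_uu_odd (j : ℕ) :
    rep R (star (uu R)) (single (2 * j + 1) (1 : R)) = single (4 * j + 3) 1 := by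
  rw [rep_star_uu]
  simp only [LinearMap.add_apply, Module.End.mul_apply]
  rw [opA'_eq0 R (2 * j + 1) j rfl, opB'_eq R (2 * j + 1) j rfl,
    opB_eq R j (2 * j + 1) rfl, opB_eq R (2 * j + 1) (4 * j + 3) (by omega)]
  simp only [map_zero, zero_add]

lemma rep_uu_pow (k : ℕ) :
    ((rep R (uu R)) ^ k) (single 1 (1 : R)) = single (2 ^ k) 1 := by
  induction k with
  | zero => simp
  | succ k ih =>
      rw [pow_succ', Module.End.mul_apply, ih]
      cases k with
      | zero => simpa using rep_uu_one R
      | succ k =>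
          have h := rep_uu_even R (2 ^ k)
          rw [show 2 * 2 ^ k = 2 ^ (k + 1) by ring] at h
          rw [h]
          congr 1
          ring

/-- The sequence `2 ^ (k + 1) - 1`. -/
def gseq : ℕ → ℕ
  | 0 => 1
  | k + 1 => 2 * gseq k + 1

lemma gseq_add_one (k : ℕ) : gseq k + 1 = 2 ^ (k + 1) := by
  induction k with
  | zero => rfl
  | succ k ih => rw [gseq, pow_succ]; omega

lemma rep_star_uu_pow (k : ℕ) :
    ((rep R (star (uu R))) ^ k) (single 1 (1 : R)) = single (gseq k) 1 := by
  induction k with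
  | zero => simp [gseq]
  | succ k ih =>
      rw [pow_succ', Module.End.mul_apply, ih]
      cases k with
      | zero => simpa [gseq] using rep_star_uu_odd R 0
      | succ k =>
          have h := rep_star_uu_odd R (gseq k)
          rw [show 2 * gseq k + 1 = gseq (k + 1) from rfl] at h
          rw [h]
          congr 1
          show 4 * gseq k + 3 = 2 * gseq (k + 1) + 1
          rw [gseq]
          ring

/-- The injection `ℤ → ℕ`, `n ↦ 2 ^ n` for `n ≥ 0` and `n ↦ 2 ^ (1 - n) - 1` for `n < 0`. -/
def hfun : ℤ → ℕ
  | .ofNat k => 2 ^ k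
  | .negSucc k => gseq (k + 1)

lemma hfun_inj : Function.Injective hfun := by
  have pow_inj : ∀ j k : ℕ, (2 : ℕ) ^ j = 2 ^ k → j = k :=
    fun j k h => Nat.pow_right_injective (le_refl 2) h
  intro x y h
  cases x with
  | ofNat j =>
      cases y with
      | ofNat k => exact congrArg Int.ofNat (pow_inj j k h)
      | negSucc k =>
          exfalso
          have h2 : 2 ^ j + 1 = 2 ^ (k + 1 + 1) := by
            have := gseq_add_one (k + 1)
            simp only [hfun] at h
            omega
          cases j with
          | zero =>
              have := Nat.one_le_two_pow (n := k)
              rw [pow_add] at h2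
              generalize (2 : ℕ) ^ k = A at *
              omega
          | succ j =>
              have h3 : 2 ^ j * 2 + 1 = 2 ^ (k + 1) * 2 := by
                rw [← pow_succ, ← pow_succ]; exact h2
              generalize (2 : ℕ) ^ j = A at h3
              generalize (2 : ℕ) ^ (k + 1) = B at h3
              omega
  | negSucc j =>
      cases y with
      | ofNat k =>
          exfalso
          have h2 : 2 ^ k + 1 = 2 ^ (j + 1 + 1) := by
            have := gseq_add_one (j + 1)
            simp only [hfun] at h
            omega
          cases k with
          | zero =>
              have := Nat.one_le_two_pow (n := j)
              rw [pow_add] at h2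
              generalize (2 : ℕ) ^ j = A at *
              omega
          | succ k =>
              have h3 : 2 ^ k * 2 + 1 = 2 ^ (j + 1) * 2 := by
                rw [← pow_succ, ← pow_succ]; exact h2
              generalize (2 : ℕ) ^ k = A at h3
              generalize (2 : ℕ) ^ (j + 1) = B at h3
              omega
      | negSucc k =>
          simp only [hfun] at h
          have hj := gseq_add_one (j + 1)
          have hk := gseq_add_one (k + 1)
          have : (2 : ℕ) ^ (j + 1 + 1) = 2 ^ (k + 1 + 1) := by omega
          have := pow_inj _ _ this
          simp only [Int.negSucc.injEq]
          omega

lemma key (n : ℤ) :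
    rep R (((U R ^ n : (L2 R)ˣ) : L2 R)) (single 1 (1 : R)) = single (hfun n) 1 := by
  cases n with
  | ofNat k =>
      rw [Int.ofNat_eq_coe, zpow_natCast, Units.val_pow_eq_pow_val, map_pow]
      exact rep_uu_pow R k
  | negSucc k =>
      rw [zpow_negSucc, ← inv_pow, Units.val_pow_eq_pow_val, map_pow]
      have : ((U R)⁻¹ : (L2 R)ˣ) = (star (uu R) : L2 R) := rfl
      rw [this]
      exact rep_star_uu_pow R (k + 1)

/-- The algebra homomorphism `R[z,z⁻¹] → L₂(R)`, `z ↦ u`. -/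
noncomputable def phi : LaurentPolynomial R →ₐ[R] L2 R :=
  (AddMonoidAlgebra.lift R (L2 R) ℤ)
    ((Units.coeHom (L2 R)).comp (zpowersHom (L2 R)ˣ (U R)))

lemma phi_single (n : ℤ) (r : R) :
    phi R (AddMonoidAlgebra.single n r) = r • ((U R ^ n : (L2 R)ˣ) : L2 R) := by
  rw [phi]
  have : (AddMonoidAlgebra.single n r : LaurentPolynomial R) = AddMonoidAlgebra.single n r := rfl
  rw [this, AddMonoidAlgebra.lift_single]
  rfl

lemma phi_T_one : phi R (LaurentPolynomial.T 1) = uu R := by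
  rw [LaurentPolynomial.T, phi_single, one_smul, zpow_one]
  rfl

lemma phi_T_neg_one : phi R (LaurentPolynomial.T (-1)) = star (uu R) := by
  rw [LaurentPolynomial.T, phi_single, one_smul, zpow_neg_one]
  rfl

lemma L_single (n : ℤ) (r : R) :
    rep R (phi R (AddMonoidAlgebra.single n r)) (Finsupp.single 1 (1 : R)) =
      Finsupp.single (hfun n) r := by
  rw [phi_single, map_smul, LinearMap.smul_apply, key R n, Finsupp.smul_single', mul_one]

lemma phi_inj : Function.Injective (phi R) := by
  rw [injective_iff_map_eq_zero]
  intro p hp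
  have L_eq : ((LinearMap.applyₗ (Finsupp.single 1 (1 : R))).comp
      ((rep R).toLinearMap.comp (phi R).toLinearMap)) =
      (Finsupp.lmapDomain R R hfun).comp (AddMonoidAlgebra.coeffLinearEquiv R).toLinearMap := by
    apply AddMonoidAlgebra.lhom_ext'
    intro n
    apply LinearMap.ext
    intro r
    simp only [LinearMap.comp_apply, AlgHom.toLinearMap_apply, LinearMap.applyₗ_apply_apply,
      AddMonoidAlgebra.lsingle_apply, LinearEquiv.coe_coe, AddMonoidAlgebra.coeffLinearEquiv_apply,
      AddMonoidAlgebra.coeff_single, Finsupp.lmapDomain_apply, Finsupp.mapDomain_single]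
    exact L_single R n r
  have h2 : rep R (phi R p) (Finsupp.single 1 (1 : R)) = 0 := by
    rw [hp, map_zero]
    rfl
  have hL : ((Finsupp.lmapDomain R R hfun).comp
      (AddMonoidAlgebra.coeffLinearEquiv R).toLinearMap) p = 0 := by
    rw [← L_eq]
    exact h2
  have h0 : Finsupp.mapDomain hfun p.coeff = Finsupp.mapDomain hfun 0 := by
    rw [Finsupp.mapDomain_zero]
    exact hL
  have hc := Finsupp.mapDomain_injective hfun_inj h0
  rw [← AddMonoidAlgebra.ofCoeff_coeff p, hc]
  rfl

end LeavittAux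

open LeavittAux in
/-- With `u = aaa* + aba*b* + bb*b* ∈ L_{2,R}`, there is a unital `R`-algebra
homomorphism `R[z, z⁻¹] → L_{2,R}` sending `z ↦ u` and `z⁻¹ ↦ u*`, and it is
injective. -/
theorem laurent_embeds_in_l2
    (R : Type) [CommRing R] :
    ∃ φ : LaurentPolynomial R →ₐ[R] L2 R,
      φ (LaurentPolynomial.T 1) =
        (La R * La R * star (La R) + La R * Lb R * star (La R) * star (Lb R) +
          Lb R * star (Lb R) * star (Lb R)) ∧
      φ (LaurentPolynomial.T (-1)) =
        star (La R * La R * star (La R) + La R * Lb R * star (La R) * star (Lb R) +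
          Lb R * star (Lb R) * star (Lb R)) ∧
      Function.Injective φ := by
  refine ⟨phi R, ?_, ?_, phi_inj R⟩
  · exact phi_T_one R
  · exact phi_T_neg_one R
end
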